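/- Suppose M is uniformly continuous. Then the following are equivalent: (i) M is non-degenerate; (ii) M(G) > 0 for all M ∈ Ẽ(M); (iii) E_⊥(M) is empty; (iv) Ẽ(M) = E(M); (v) M(G) = 1 for all M ∈ Ẽ(M). -/

import Mathlib

open MeasureTheory Filter Topology
open scoped ENNReal NNReal Classical

noncomputable section

/-- A countable Markov system `(K_{i(e)}, w_e, p_e)_{e ∈ E}` on a metric space `K`:
a partition `(K_j)_{j ∈ N}` of `K` into nonempty Borel sets, source and target maps
`i, t : E → N` (`i` surjective), and for each `e ∈ E` Borel maps `w_e` and probability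
functions `p_e` (extended by zero outside `K_{i(e)}`) with
`∑_{e, i(e)=j} p_e(y) = 1` for `y ∈ K_j`. -/
structure MarkovSystem (K : Type*) [MetricSpace K] [MeasurableSpace K]
    (N : Type*) (E : Type*) where
  Kset : N → Set K
  Kset_nonempty : ∀ j, (Kset j).Nonempty
  Kset_measurable : ∀ j, MeasurableSet (Kset j)
  Kset_disjoint : Pairwise (Function.onFun Disjoint Kset)
  Kset_cover : (⋃ j, Kset j) = Set.univ
  i : E → N
  t : E → N
  i_surj : Function.Surjective i
  w : E → K → K
  p : E → K → ℝ
  w_measurable : ∀ e, Measurable (w e)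
  p_measurable : ∀ e, Measurable (p e)
  p_nonneg : ∀ e x, 0 ≤ p e x
  p_le_one : ∀ e x, p e x ≤ 1
  p_zero_outside : ∀ e x, x ∉ Kset (i e) → p e x = 0
  w_mapsTo : ∀ e, Set.MapsTo (w e) (Kset (i e)) (Kset (t e))
  p_pos_somewhere : ∀ e, ∃ x ∈ Kset (i e), 0 < p e x
  p_tsum_one : ∀ j, ∀ x ∈ Kset j, (∑' e : {e : E // i e = j}, p e.val x) = 1

/-- `Ē = E ∪ {∞}` (one-point compactification); with `E` countable its Borel σ-algebra
consists of all subsets. -/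
instance optionMeasurableSpace (E : Type*) : MeasurableSpace (Option E) := ⊤

/-- The code space `Σ̄ = Ē^ℤ`, carrying the product σ-algebra. -/
abbrev CodeSpace (E : Type*) : Type _ := ℤ → Option E

/-- The left shift `S` on the code space, `(Sσ)_{k-1} = σ_k`. -/
def shiftMap (E : Type*) : CodeSpace E → CodeSpace E := fun σ k => σ (k + 1)

/-- The cylinder set `_m[es₀, …, es_{n}] = {σ : σ_{m+k} = es_k}`. -/
def cylSetL {E : Type*} (m : ℤ) (es : List (Option E)) : Set (CodeSpace E) :=
  {σ | ∀ (k : ℕ) (h : k < es.length), σ (m + (k : ℤ)) = es.get ⟨k, h⟩}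

/-- The σ-algebra `𝓕` generated by the cylinder sets `_m[e_m, …, e_0]`, `m ≤ 0`. -/
def pastAlgebra (E : Type*) : MeasurableSpace (CodeSpace E) :=
  MeasurableSpace.generateFrom
    {A | ∃ es : List (Option E), es ≠ [] ∧ A = cylSetL (1 - (es.length : ℤ)) es}

/-- The conditional entropy `h_S(Λ) = H_Λ((_1[e])_{e ∈ Ē} | 𝓕)`. -/
def entropyS {E : Type*} (Λ : Measure (CodeSpace E)) : ℝ≥0∞ :=
  ∑' eo : Option E,
    ∫⁻ σ, ENNReal.ofReal
        (Real.negMulLog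
          ((Λ[Set.indicator {τ : CodeSpace E | τ 1 = eo} (fun _ => (1 : ℝ)) | pastAlgebra E]) σ)) ∂Λ

namespace MarkovSystem

variable {K : Type*} [MetricSpace K] [MeasurableSpace K] {N E : Type*}

/-- The Markov operator `Uf = ∑_e p_e · (f ∘ w_e)` acting on nonnegative Borel functions. -/
def markovOp (M : MarkovSystem K N E) (f : K → ℝ≥0∞) : K → ℝ≥0∞ :=
  fun x => ∑' e : E, ENNReal.ofReal (M.p e x) * f (M.w e x)

/-- The adjoint operator `U*` acting on measures, `(U*ν)(B) = ∫ U(1_B) dν`. -/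
def adjOp (M : MarkovSystem K N E) (ν : Measure K) : Measure K :=
  Measure.sum fun e : E =>
    Measure.map (M.w e) (ν.withDensity fun x => ENNReal.ofReal (M.p e x))

/-- `μ ∈ P(M)`: `μ` is an invariant Borel probability measure, `U*μ = μ`. -/
def IsInvariantMeasure (M : MarkovSystem K N E) (μ : Measure K) : Prop :=
  IsProbabilityMeasure μ ∧ M.adjOp μ = μ

/-- The path space `Σ_G`: all coordinates lie in `E` and `i(σ_{n+1}) = t(σ_n)`. -/
def pathSpace (M : MarkovSystem K N E) : Set (CodeSpace E) :=
  {σ | ∀ n : ℤ, ∃ e e' : E, σ n = some e ∧ σ (n + 1) = some e' ∧ M.i e' = M.t e}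

/-- `T_j = {σ ∈ Σ_G : t(σ_0) = j}`. -/
def Tset (M : MarkovSystem K N E) (j : N) : Set (CodeSpace E) :=
  {σ | σ ∈ M.pathSpace ∧ ∃ e : E, σ 0 = some e ∧ M.t e = j}

/-- `w` extended to `Ē`, with `w_∞ = id`. -/
def wext (M : MarkovSystem K N E) : Option E → K → K := fun o => o.elim id M.w

/-- `p` extended to `Ē`, with `p_∞ = 0`. -/
def pext (M : MarkovSystem K N E) : Option E → K → ℝ := fun o => o.elim (fun _ => 0) M.p

/-- `i` extended to `Ē`, with `i(∞) = j₀`. -/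
def iext (M : MarkovSystem K N E) (j0 : N) : Option E → N := fun o => o.elim j0 M.i

/-- `t` extended to `Ē`, with `t(∞) = j₀`. -/
def text (M : MarkovSystem K N E) (j0 : N) : Option E → N := fun o => o.elim j0 M.t

/-- `iterW M σ n y = w_{σ_0} ∘ w_{σ_{-1}} ∘ ⋯ ∘ w_{σ_{-n}} (y)`. -/
def iterW (M : MarkovSystem K N E) (σ : CodeSpace E) : ℕ → K → K
  | 0, y => M.wext (σ 0) y
  | n + 1, y => M.iterW σ n (M.wext (σ (-(n + 1 : ℤ))) y)

/-- `orbit M j0 xp σ n = w_{σ_0} ∘ ⋯ ∘ w_{σ_{-n}} (x_{i(σ_{-n})})`. -/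
def orbit (M : MarkovSystem K N E) (j0 : N) (xp : N → K) (σ : CodeSpace E) (n : ℕ) : K :=
  M.iterW σ n (xp (M.iext j0 (σ (-(n : ℤ)))))

/-- `D`: the set of `σ ∈ Σ_G` for which `lim_{m → -∞} w_{σ_0} ∘ ⋯ ∘ w_{σ_m}(x_{i(σ_m)})` exists. -/
def codeDomain (M : MarkovSystem K N E) (j0 : N) (xp : N → K) : Set (CodeSpace E) :=
  {σ | σ ∈ M.pathSpace ∧ ∃ l : K, Tendsto (fun n : ℕ => M.orbit j0 xp σ n) atTop (𝓝 l)}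

/-- The coding map `F`: the above limit on `D`, and `x_{t(σ_0)}` elsewhere. -/
def code (M : MarkovSystem K N E) (j0 : N) (xp : N → K) (σ : CodeSpace E) : K :=
  if h : σ ∈ M.codeDomain j0 xp then h.2.choose else xp (M.text j0 (σ 0))

/-- `Λ ∈ E(M)`: `Λ` is a shift-invariant Borel probability measure with `Λ(D) = 1` and
`E_Λ(1_{_1[e]} | 𝓕) = p_e ∘ F` `Λ`-a.e. for every `e ∈ E` (an equilibrium state). -/
def IsEquilibrium (M : MarkovSystem K N E) (j0 : N) (xp : N → K)
    (Λ : Measure (CodeSpace E)) : Prop :=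
  IsProbabilityMeasure Λ ∧ Measure.map (shiftMap E) Λ = Λ ∧
    Λ (M.codeDomain j0 xp) = 1 ∧
    ∀ e : E,
      (Λ[Set.indicator {σ : CodeSpace E | σ 1 = some e} (fun _ => (1 : ℝ)) | pastAlgebra E])
        =ᵐ[Λ] fun σ => M.p e (M.code j0 xp σ)

/-- `pbar` is the family of continuous extensions `p̄_e` of `p_e|_{K_{i(e)}}` to the closure
of `K_{i(e)}`, extended further by zero on `K`. -/
def IsUCExtensionP (M : MarkovSystem K N E) (pbar : E → K → ℝ) : Prop :=
  ∀ e : E, ContinuousOn (pbar e) (closure (M.Kset (M.i e))) ∧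
    (∀ x ∈ M.Kset (M.i e), pbar e x = M.p e x) ∧
    (∀ x, x ∉ closure (M.Kset (M.i e)) → pbar e x = 0)

/-- `wb` is a family of continuous extensions `w̄_e` of `w_e|_{K_{i(e)}}` to the closure
of `K_{i(e)}`. -/
def IsUCExtensionW (M : MarkovSystem K N E) (wb : E → K → K) : Prop :=
  ∀ e : E, ContinuousOn (wb e) (closure (M.Kset (M.i e))) ∧
    (∀ x ∈ M.Kset (M.i e), wb e x = M.w e x)

/-- The Markov system is uniformly continuous: each `w_e|_{K_{i(e)}}` and `p_e|_{K_{i(e)}}`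
is uniformly continuous. -/
def IsUniformlyContinuous (M : MarkovSystem K N E) : Prop :=
  ∀ e : E, UniformContinuousOn (M.w e) (M.Kset (M.i e)) ∧
    UniformContinuousOn (M.p e) (M.Kset (M.i e))

/-- `∂p_e = p̄_e · 1_{cl(K_{i(e)}) \ K_{i(e)}}`. -/
def dp (M : MarkovSystem K N E) (pbar : E → K → ℝ) (e : E) : K → ℝ :=
  Set.indicator (closure (M.Kset (M.i e)) \ M.Kset (M.i e)) (pbar e)

/-- `Λ ∈ Ẽ(M)` (asymptotic state): shift-invariant probability with `Λ(D) = 1` and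
`E_Λ(1_{_1[e]} | 𝓕) = (p̄_e ∘ F)·1_{T_{i(e)}}` `Λ`-a.e. for every `e`. -/
def IsAsymptotic (M : MarkovSystem K N E) (j0 : N) (xp : N → K) (pbar : E → K → ℝ)
    (Λ : Measure (CodeSpace E)) : Prop :=
  IsProbabilityMeasure Λ ∧ Measure.map (shiftMap E) Λ = Λ ∧
    Λ (M.codeDomain j0 xp) = 1 ∧
    ∀ e : E,
      (Λ[Set.indicator {σ : CodeSpace E | σ 1 = some e} (fun _ => (1 : ℝ)) | pastAlgebra E])
        =ᵐ[Λ] Set.indicator (M.Tset (M.i e)) (fun σ => pbar e (M.code j0 xp σ))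

/-- `Λ ∈ E_⊥(M)`: shift-invariant probability with `Λ(D) = 1` and
`E_Λ(1_{_1[e]} | 𝓕) = (∂p_e ∘ F)·1_{T_{i(e)}}` `Λ`-a.e. for every `e`. -/
def IsPerp (M : MarkovSystem K N E) (j0 : N) (xp : N → K) (pbar : E → K → ℝ)
    (Λ : Measure (CodeSpace E)) : Prop :=
  IsProbabilityMeasure Λ ∧ Measure.map (shiftMap E) Λ = Λ ∧
    Λ (M.codeDomain j0 xp) = 1 ∧
    ∀ e : E,
      (Λ[Set.indicator {σ : CodeSpace E | σ 1 = some e} (fun _ => (1 : ℝ)) | pastAlgebra E])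
        =ᵐ[Λ] Set.indicator (M.Tset (M.i e)) (fun σ => M.dp pbar e (M.code j0 xp σ))

/-- `G = ⋃_{k ≥ 0} ⋃_{j ∈ N} S^{-k}(F^{-1}(K_j) ∩ T_j)`. -/
def Gset (M : MarkovSystem K N E) (j0 : N) (xp : N → K) : Set (CodeSpace E) :=
  ⋃ (k : ℕ) (j : N), (shiftMap E)^[k] ⁻¹' ((M.code j0 xp) ⁻¹' (M.Kset j) ∩ M.Tset j)

/-- `M` is non-degenerate: for every asymptotic state `Λ` there is `i ∈ N` with
`Λ(T_i ∩ F^{-1}(K_i)) > 0`. -/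
def IsNonDegenerate (M : MarkovSystem K N E) (j0 : N) (xp : N → K) (pbar : E → K → ℝ) : Prop :=
  ∀ Λ : Measure (CodeSpace E), M.IsAsymptotic j0 xp pbar Λ →
    ∃ i : N, 0 < Λ (M.Tset i ∩ (M.code j0 xp) ⁻¹' (M.Kset i))

/-- `M` is consistent: `F(Λ) ∈ P(M)` for every asymptotic state `Λ`. -/
def IsConsistent (M : MarkovSystem K N E) (j0 : N) (xp : N → K) (pbar : E → K → ℝ) : Prop :=
  ∀ Λ : Measure (CodeSpace E), M.IsAsymptotic j0 xp pbar Λ →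
    M.IsInvariantMeasure (Measure.map (M.code j0 xp) Λ)

/-- `Rf = ∑_e ∂p_e · (f ∘ w̄_e)`. -/
def Rop (M : MarkovSystem K N E) (pbar : E → K → ℝ) (wb : E → K → K)
    (f : K → ℝ≥0∞) : K → ℝ≥0∞ :=
  fun x => ∑' e : E, ENNReal.ofReal (M.dp pbar e x) * f (wb e x)

/-- `Ω = ⋂_{n ≥ 1} {R^n 1 ≥ 1}`. -/
def OmegaSet (M : MarkovSystem K N E) (pbar : E → K → ℝ) (wb : E → K → K) : Set K :=
  ⋂ n : ℕ, {x : K | 1 ≤ (M.Rop pbar wb)^[n + 1] (fun _ => 1) x}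

/-- `ξ_j = ∑_{e, i(e) = j} sup_{x ∈ K_j} p_e(x)`. -/
def xi (M : MarkovSystem K N E) (j : N) : ℝ≥0∞ :=
  ∑' e : {e : E // M.i e = j}, ⨆ x ∈ M.Kset j, ENNReal.ofReal (M.p e.val x)

/-- `M` has a dominating Markov chain: `ξ_j < ∞` for all `j ∈ N`. -/
def HasDominatingChain (M : MarkovSystem K N E) : Prop := ∀ j : N, M.xi j ≠ ⊤

/-- `ξ_j · q_{j j'} = ∑_{e, i(e) = j, t(e) = j'} sup_{x ∈ K_j} p_e(x)`. -/
def xiq (M : MarkovSystem K N E) (j j' : N) : ℝ≥0∞ :=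
  ∑' e : {e : E // M.i e = j ∧ M.t e = j'}, ⨆ x ∈ M.Kset j, ENNReal.ofReal (M.p e.val x)

/-- `c = ∑_{j'} sup_j ξ_j q_{j j'}`. -/
def cConst (M : MarkovSystem K N E) : ℝ≥0∞ := ∑' j' : N, ⨆ j : N, M.xiq j j'

/-- `α^{x_0}_n({j}) = (1/n) ∑_{k=1}^n ((U*)^k δ_{x_0})(K_j)`. -/
def alphaMeas (M : MarkovSystem K N E) (x0 : K) (n : ℕ) (j : N) : ℝ≥0∞ :=
  (n : ℝ≥0∞)⁻¹ * ∑ k ∈ Finset.range n, (M.adjOp^[k + 1] (Measure.dirac x0)) (M.Kset j)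

/-- Condition (T) at `x_0`: the sequence `(α^{x_0}_n)_n` is uniformly tight. -/
def ConditionT (M : MarkovSystem K N E) (x0 : K) : Prop :=
  ∀ ε : ℝ, 0 < ε → ∃ V : Finset N,
    ∀ n : ℕ, (∑' j : {j : N // j ∉ V}, M.alphaMeas x0 (n + 1) j.val) < ENNReal.ofReal ε

/-- `M` is contractive with contraction rate `a`:
`∑_{e, i(e) = j} p_e(x) d(w_e x, w_e y) ≤ a·d(x, y)` on each `K_j`. -/
def IsContractive (M : MarkovSystem K N E) (a : ℝ) : Prop :=
  ∀ j : N, ∀ x ∈ M.Kset j, ∀ y ∈ M.Kset j,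
    (∑' e : {e : E // M.i e = j},
        ENNReal.ofReal (M.p e.val x * dist (M.w e.val x) (M.w e.val y)))
      ≤ ENNReal.ofReal (a * dist x y)

/-- `L(x) = ∑_j d(x, x_j)·1_{K_j}(x)`. -/
def Lfun (M : MarkovSystem K N E) (xp : N → K) : K → ℝ≥0∞ :=
  fun x => ∑' j : N, Set.indicator (M.Kset j) (fun y => ENNReal.ofReal (dist y (xp j))) x

/-- `b = sup_j sup_{x ∈ K_j} ∑_{e, i(e) = j} p_e(x)·d(w_e(x_{i(e)}), x_{t(e)})`. -/
def bConst (M : MarkovSystem K N E) (xp : N → K) : ℝ≥0∞ :=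
  ⨆ j : N, ⨆ x ∈ M.Kset j,
    ∑' e : {e : E // M.i e = j},
      ENNReal.ofReal (M.p e.val x * dist (M.w e.val (xp (M.i e.val))) (xp (M.t e.val)))

/-- `P^m_x` evaluated on a word: `p_{e_0}(x)·p_{e_1}(w_{e_0}x)·⋯`. -/
def wordProb (M : MarkovSystem K N E) : List (Option E) → K → ℝ
  | [], _ => 1
  | o :: rest, x => M.pext o x * M.wordProb rest (M.wext o x)

/-- `Λ = Φ(μ)`: `Λ` is a shift-invariant Borel probability measure with
`Λ(_m[e_m, …, e_n]) = ∫ P^m_x(_m[e_m, …, e_n]) dμ(x)` for all cylinders with `m ≤ 0`. -/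
def IsPhiOf (M : MarkovSystem K N E) (μ : Measure K) (Λ : Measure (CodeSpace E)) : Prop :=
  IsProbabilityMeasure Λ ∧ Measure.map (shiftMap E) Λ = Λ ∧
    ∀ m : ℤ, m ≤ 0 → ∀ es : List (Option E),
      Λ (cylSetL m es) = ∫⁻ x, ENNReal.ofReal (M.wordProb es x) ∂μ

/-- The (negative of the) energy function: `-u(σ) = -log p_{σ_1}(F(σ))` on `D`
(`+∞` if `p_{σ_1}(F(σ)) = 0`) and `+∞` off `D`, valued in `[0, ∞]`. -/
def negEnergy (M : MarkovSystem K N E) (j0 : N) (xp : N → K) (σ : CodeSpace E) : ℝ≥0∞ :=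
  if σ ∈ M.codeDomain j0 xp then
    (σ 1).elim ⊤ fun e =>
      if M.p e (M.code j0 xp σ) = 0 then ⊤
      else ENNReal.ofReal (-Real.log (M.p e (M.code j0 xp σ)))
  else ⊤

/-- The free energy `h_S(Λ) + ∫ u dΛ`, as an extended real number. -/
def freeEnergy (M : MarkovSystem K N E) (j0 : N) (xp : N → K)
    (Λ : Measure (CodeSpace E)) : EReal :=
  (entropyS Λ : EReal) - ((∫⁻ σ, M.negEnergy j0 xp σ ∂Λ : ℝ≥0∞) : EReal)

/-- `Λ₀ ∈ E(u)`: `Λ₀` is a thermodynamic equilibrium state for the energy function `u`. -/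
def IsEquilibriumForU (M : MarkovSystem K N E) (j0 : N) (xp : N → K)
    (Λ0 : Measure (CodeSpace E)) : Prop :=
  IsProbabilityMeasure Λ0 ∧ Measure.map (shiftMap E) Λ0 = Λ0 ∧ entropyS Λ0 ≠ ⊤ ∧
    M.freeEnergy j0 xp Λ0 =
      sSup {r : EReal | ∃ Λ : Measure (CodeSpace E),
        IsProbabilityMeasure Λ ∧ Measure.map (shiftMap E) Λ = Λ ∧ entropyS Λ ≠ ⊤ ∧
          r = M.freeEnergy j0 xp Λ}

end MarkovSystem

end

noncomputable section

section NDAux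

open MarkovSystem

lemma measurableSet_option' {E : Type*} (s : Set (Option E)) : MeasurableSet s :=
  MeasurableSpace.measurableSet_top

lemma measurable_from_option {E : Type*} {β : Type*} [MeasurableSpace β] (f : Option E → β) :
    Measurable f := fun _ _ => MeasurableSpace.measurableSet_top

instance {E : Type*} : MeasurableSingletonClass (Option E) :=
  ⟨fun _ => MeasurableSpace.measurableSet_top⟩

lemma measurable_shiftMap (E : Type*) : Measurable (shiftMap E) :=
  measurable_pi_lambda _ fun k => measurable_pi_apply (k + 1)

lemma pastAlgebra_le (E : Type*) :
    pastAlgebra E ≤ (inferInstance : MeasurableSpace (CodeSpace E)) := by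
  refine MeasurableSpace.generateFrom_le ?_
  rintro A ⟨es, -, rfl⟩
  have h : cylSetL (1 - (es.length : ℤ)) es =
      ⋂ (k : ℕ) (h : k < es.length),
        {σ : CodeSpace E | σ (1 - (es.length : ℤ) + (k : ℤ)) = es.get ⟨k, h⟩} := by
    ext σ
    simp only [cylSetL, Set.mem_setOf_eq, Set.mem_iInter]
  rw [h]
  refine MeasurableSet.iInter fun k => MeasurableSet.iInter fun hk => ?_
  show MeasurableSet ((fun σ : CodeSpace E => σ (1 - (es.length : ℤ) + (k : ℤ))) ⁻¹'
    {es.get ⟨k, hk⟩})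
  exact (measurable_pi_apply _) (measurableSet_option' _)

lemma measurableSet_cyl_past {E : Type*} [Countable E] :
    ∀ (n : ℕ) (m : ℤ) (es : List (Option E)), es ≠ [] → m + es.length + n = 1 →
      MeasurableSet[pastAlgebra E] (cylSetL m es) := by
  intro n
  induction n with
  | zero =>
    intro m es hne h
    have hm : m = 1 - (es.length : ℤ) := by push_cast at h; omega
    subst hm
    exact MeasurableSpace.measurableSet_generateFrom ⟨es, hne, rfl⟩
  | succ n ih =>
    intro m es hne h
    have hU : cylSetL m es = ⋃ o : Option E, cylSetL m (es ++ [o]) := by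
      ext σ
      simp only [cylSetL, Set.mem_setOf_eq, Set.mem_iUnion]
      constructor
      · intro hσ
        refine ⟨σ (m + es.length), fun k hk => ?_⟩
        simp only [List.get_eq_getElem]
        rcases lt_or_ge k es.length with hlt | hge
        · rw [List.getElem_append_left hlt]
          simpa using hσ k hlt
        · have hk' : k = es.length := by
            have := hk; simp only [List.length_append, List.length_singleton] at this
            omega
          subst hk'
          simp [List.getElem_concat_length]
      · rintro ⟨o, ho⟩ k hk
        have hk2 : k < (es ++ [o]).length := by
          simp only [List.length_append, List.length_singleton]; omega
        have := ho k hk2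
        simp only [List.get_eq_getElem] at this ⊢
        rwa [List.getElem_append_left hk] at this
    rw [hU]
    exact MeasurableSet.iUnion fun o => ih m (es ++ [o]) (by simp)
      (by simp only [List.length_append, List.length_singleton] at *; push_cast at h ⊢; omega)

lemma measurableSet_coord_past {E : Type*} [Countable E] {k : ℤ} (hk : k ≤ 0) (o : Option E) :
    MeasurableSet[pastAlgebra E] {σ : CodeSpace E | σ k = o} := by
  have h1 : {σ : CodeSpace E | σ k = o} = cylSetL k [o] := by
    ext σ
    simp only [cylSetL, Set.mem_setOf_eq, List.length_singleton]
    constructor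
    · intro h k' hk'
      interval_cases k'
      · simpa using h
    · intro h
      simpa using h 0 (by norm_num)
  rw [h1]
  refine measurableSet_cyl_past (-k).toNat k [o] (by simp) ?_
  have : ((-k).toNat : ℤ) = -k := Int.toNat_of_nonneg (by omega)
  simp only [List.length_singleton]
  push_cast [this]
  omega

lemma measurable_coord_past {E : Type*} [Countable E] {k : ℤ} (hk : k ≤ 0) :
    Measurable[pastAlgebra E] (fun σ : CodeSpace E => σ k) := by
  intro s _
  have h : (fun σ : CodeSpace E => σ k) ⁻¹' s = ⋃ o ∈ s, {σ : CodeSpace E | σ k = o} := by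
    ext σ; simp [eq_comm]
  rw [h]
  exact MeasurableSet.biUnion (Set.to_countable s) fun o _ => measurableSet_coord_past hk o

lemma measurableSet_pair_set {E : Type*} [Countable E] {m : MeasurableSpace (CodeSpace E)}
    {a b : ℤ} (ha : Measurable[m] fun σ : CodeSpace E => σ a)
    (hb : Measurable[m] fun σ : CodeSpace E => σ b) (P : Option E → Option E → Prop) :
    MeasurableSet[m] {σ : CodeSpace E | P (σ a) (σ b)} := by
  have h : {σ : CodeSpace E | P (σ a) (σ b)} =
      ⋃ (q : Option E × Option E) (_ : P q.1 q.2),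
        ({σ : CodeSpace E | σ a = q.1} ∩ {σ : CodeSpace E | σ b = q.2}) := by
    ext σ
    simp only [Set.mem_setOf_eq, Set.mem_iUnion, Set.mem_inter_iff]
    constructor
    · intro h; exact ⟨(σ a, σ b), h, rfl, rfl⟩
    · rintro ⟨q, hq, h1, h2⟩; rw [h1, h2]; exact hq
  rw [h]
  refine MeasurableSet.iUnion fun q => MeasurableSet.iUnion fun _ => MeasurableSet.inter ?_ ?_
  · show MeasurableSet[m] ((fun σ : CodeSpace E => σ a) ⁻¹' {q.1})
    exact ha (measurableSet_option' _)
  · show MeasurableSet[m] ((fun σ : CodeSpace E => σ b) ⁻¹' {q.2})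
    exact hb (measurableSet_option' _)

namespace MarkovSystem

variable {K : Type*} [MetricSpace K] [MeasurableSpace K] {N E : Type*}

lemma iterW_zero (M : MarkovSystem K N E) (σ : CodeSpace E) (y : K) :
    M.iterW σ 0 y = M.wext (σ 0) y := rfl

lemma iterW_succ (M : MarkovSystem K N E) (σ : CodeSpace E) (n : ℕ) (y : K) :
    M.iterW σ (n + 1) y = M.iterW σ n (M.wext (σ (-(n + 1 : ℤ))) y) := rfl

variable [Countable E]

lemma measurable_wext_comp (M : MarkovSystem K N E) {m : MeasurableSpace (CodeSpace E)}
    (hco : ∀ k : ℤ, k ≤ 0 → Measurable[m] fun σ : CodeSpace E => σ k)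
    {g : CodeSpace E → K} (hg : Measurable[m] g) {k : ℤ} (hk : k ≤ 0) :
    Measurable[m] fun σ => M.wext (σ k) (g σ) := by
  have h1 : Measurable[m] fun σ : CodeSpace E => ((g σ, σ k) : K × Option E) :=
    hg.prodMk (hco k hk)
  have h2 : Measurable fun q : K × Option E => M.wext q.2 q.1 := by
    refine measurable_from_prod_countable_left fun o => ?_
    cases o with
    | none => exact measurable_id
    | some e => exact M.w_measurable e
  exact h2.comp h1

lemma measurable_iterW (M : MarkovSystem K N E) {m : MeasurableSpace (CodeSpace E)}
    (hco : ∀ k : ℤ, k ≤ 0 → Measurable[m] fun σ : CodeSpace E => σ k) :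
    ∀ (n : ℕ) {g : CodeSpace E → K}, Measurable[m] g →
      Measurable[m] fun σ => M.iterW σ n (g σ) := by
  intro n
  induction n with
  | zero =>
    intro g hg
    simp only [iterW_zero]
    exact M.measurable_wext_comp hco hg le_rfl
  | succ n ih =>
    intro g hg
    simp only [iterW_succ]
    exact ih (M.measurable_wext_comp hco hg (by omega))

lemma measurable_orbit (M : MarkovSystem K N E) (j0 : N) (xp : N → K)
    {m : MeasurableSpace (CodeSpace E)}
    (hco : ∀ k : ℤ, k ≤ 0 → Measurable[m] fun σ : CodeSpace E => σ k) (n : ℕ) :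
    Measurable[m] fun σ => M.orbit j0 xp σ n := by
  have hg : Measurable[m] fun σ : CodeSpace E => xp (M.iext j0 (σ (-(n : ℤ)))) :=
    (measurable_from_option (fun o => xp (M.iext j0 o))).comp (hco _ (by omega))
  exact M.measurable_iterW hco n hg


lemma iterW_congr (M : MarkovSystem K N E) :
    ∀ (n : ℕ) (σ τ : CodeSpace E), (∀ k : ℤ, -(n : ℤ) ≤ k → k ≤ 0 → σ k = τ k) →
      ∀ y : K, M.iterW σ n y = M.iterW τ n y := by
  intro n
  induction n with
  | zero =>
    intro σ τ hag y
    simp only [iterW_zero]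
    rw [hag 0 (by omega) le_rfl]
  | succ n ih =>
    intro σ τ hag y
    simp only [iterW_succ]
    rw [hag (-(n + 1 : ℤ)) (by push_cast; omega) (by omega)]
    exact ih σ τ (fun k h1 h2 => hag k (by push_cast at h1 ⊢; omega) h2) _

lemma orbit_congr (M : MarkovSystem K N E) (j0 : N) (xp : N → K) (n : ℕ) (σ τ : CodeSpace E)
    (hag : ∀ k : ℤ, -(n : ℤ) ≤ k → k ≤ 0 → σ k = τ k) :
    M.orbit j0 xp σ n = M.orbit j0 xp τ n := by
  unfold orbit
  rw [hag (-(n : ℤ)) (by omega) (by omega)]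
  exact M.iterW_congr n σ τ hag _

lemma measurable_factor_through_coords {β : Type*} [MeasurableSpace β]
    {m : MeasurableSpace (CodeSpace E)}
    (hco : ∀ k : ℤ, k ≤ 0 → Measurable[m] fun σ : CodeSpace E => σ k)
    (f : CodeSpace E → β) (n : ℕ)
    (hf : ∀ σ τ : CodeSpace E, (∀ k : ℤ, -(n : ℤ) ≤ k → k ≤ 0 → σ k = τ k) → f σ = f τ) :
    Measurable[m] f := by
  classical
  let ext : (Fin (n + 1) → Option E) → CodeSpace E := fun v k =>
    if h : 0 ≤ -k ∧ (-k).toNat < n + 1 then v ⟨(-k).toNat, h.2⟩ else none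
  let c : CodeSpace E → (Fin (n + 1) → Option E) := fun σ i => σ (-(i : ℤ))
  have hc : Measurable[m] c :=
    measurable_pi_lambda _ fun i => hco (-(i : ℤ)) (by omega)
  have hfc : f = (fun v => f (ext v)) ∘ c := by
    funext σ
    refine hf σ (ext (c σ)) fun k h1 h2 => ?_
    have h3 : 0 ≤ -k ∧ (-k).toNat < n + 1 := by omega
    simp only [ext, c, dif_pos h3]
    congr 1
    omega
  rw [hfc]
  exact (measurable_of_countable _).comp hc

/-- The set of `σ` for which the backward orbit converges. -/
def convSet (M : MarkovSystem K N E) (j0 : N) (xp : N → K) : Set (CodeSpace E) :=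
  {σ | ∃ l : K, Filter.Tendsto (fun n : ℕ => M.orbit j0 xp σ n) Filter.atTop (nhds l)}

lemma convSet_eq_cauchy [CompleteSpace K] (M : MarkovSystem K N E) (j0 : N) (xp : N → K) :
    M.convSet j0 xp = {σ | ∀ q : ℚ, 0 < q → ∃ Nn : ℕ, ∀ a, Nn ≤ a → ∀ b, Nn ≤ b →
      dist (M.orbit j0 xp σ a) (M.orbit j0 xp σ b) < (q : ℝ)} := by
  ext σ
  constructor
  · rintro ⟨l, hl⟩ q hq
    rcases Metric.cauchySeq_iff.1 hl.cauchySeq (q : ℝ) (by exact_mod_cast hq) with ⟨Nn, h⟩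
    exact ⟨Nn, fun a ha b hb => h a ha b hb⟩
  · intro h
    refine cauchySeq_tendsto_of_complete (Metric.cauchySeq_iff.2 fun ε hε => ?_)
    rcases exists_rat_btwn hε with ⟨q, hq0, hqε⟩
    rcases h q (by exact_mod_cast hq0) with ⟨Nn, hN⟩
    exact ⟨Nn, fun a ha b hb => lt_trans (hN a ha b hb) hqε⟩

lemma measurableSet_convSet [CompleteSpace K] [BorelSpace K] (M : MarkovSystem K N E) (j0 : N) (xp : N → K)
    {m : MeasurableSpace (CodeSpace E)}
    (hco : ∀ k : ℤ, k ≤ 0 → Measurable[m] fun σ : CodeSpace E => σ k) :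
    MeasurableSet[m] (M.convSet j0 xp) := by
  rw [convSet_eq_cauchy]
  have h : {σ : CodeSpace E | ∀ q : ℚ, 0 < q → ∃ Nn : ℕ, ∀ a, Nn ≤ a → ∀ b, Nn ≤ b →
      dist (M.orbit j0 xp σ a) (M.orbit j0 xp σ b) < (q : ℝ)} =
      ⋂ (q : ℚ) (_ : 0 < q), ⋃ Nn : ℕ, ⋂ (a : ℕ) (_ : Nn ≤ a), ⋂ (b : ℕ) (_ : Nn ≤ b),
        {σ : CodeSpace E | dist (M.orbit j0 xp σ a) (M.orbit j0 xp σ b) < (q : ℝ)} := by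
    ext σ
    simp only [Set.mem_setOf_eq, Set.mem_iInter, Set.mem_iUnion]
  rw [h]
  refine MeasurableSet.iInter fun q => MeasurableSet.iInter fun _ =>
    MeasurableSet.iUnion fun Nn => MeasurableSet.iInter fun a => MeasurableSet.iInter fun _ =>
    MeasurableSet.iInter fun b => MeasurableSet.iInter fun _ => ?_
  have hdm : Measurable[m] fun σ => dist (M.orbit j0 xp σ a) (M.orbit j0 xp σ b) := by
    refine measurable_factor_through_coords hco _ (max a b) fun σ τ hag => ?_
    rw [M.orbit_congr j0 xp a σ τ (fun k h1 h2 => hag k (by push_cast at h1 ⊢; omega) h2),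
      M.orbit_congr j0 xp b σ τ (fun k h1 h2 => hag k (by push_cast at h1 ⊢; omega) h2)]
  exact measurableSet_lt hdm measurable_const

/-- The `𝓕`-measurable version of the coding map. -/
def codeNegF (M : MarkovSystem K N E) (j0 : N) (xp : N → K) : CodeSpace E → K :=
  fun σ => if h : σ ∈ M.convSet j0 xp then h.choose else xp j0

lemma tendsto_orbit_codeNeg (M : MarkovSystem K N E) (j0 : N) (xp : N → K) {σ : CodeSpace E}
    (h : σ ∈ M.convSet j0 xp) :
    Filter.Tendsto (fun n : ℕ => M.orbit j0 xp σ n) Filter.atTop (nhds (M.codeNegF j0 xp σ)) := by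
  rw [codeNegF, dif_pos h]
  exact h.choose_spec

lemma measurable_codeNeg [CompleteSpace K] [BorelSpace K] (M : MarkovSystem K N E)
    (j0 : N) (xp : N → K) {m : MeasurableSpace (CodeSpace E)}
    (hco : ∀ k : ℤ, k ≤ 0 → Measurable[m] fun σ : CodeSpace E => σ k) :
    Measurable[m] (M.codeNegF j0 xp) := by
  have hconv := M.measurableSet_convSet j0 xp hco
  have hf : ∀ n : ℕ, Measurable[m]
      fun σ => if σ ∈ M.convSet j0 xp then M.orbit j0 xp σ n else xp j0 :=
    fun n => Measurable.ite hconv (M.measurable_orbit j0 xp hco n) measurable_const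
  refine @measurable_of_tendsto_metrizable' (CodeSpace E) K m _ _ _ _ ℕ
    (fun n σ => if σ ∈ M.convSet j0 xp then M.orbit j0 xp σ n else xp j0)
    (M.codeNegF j0 xp) Filter.atTop _ _ hf (tendsto_pi_nhds.2 fun σ => ?_)
  by_cases h : σ ∈ M.convSet j0 xp
  · simp only [if_pos h]
    exact M.tendsto_orbit_codeNeg j0 xp h
  · simp only [if_neg h, codeNegF, dif_neg h]
    exact tendsto_const_nhds

lemma measurableSet_pathSpace (M : MarkovSystem K N E) : MeasurableSet M.pathSpace := by
  have h : M.pathSpace = ⋂ n : ℤ,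
      {σ : CodeSpace E | ∃ e e' : E, σ n = some e ∧ σ (n + 1) = some e' ∧ M.i e' = M.t e} := by
    ext σ; simp only [pathSpace, Set.mem_setOf_eq, Set.mem_iInter]
  rw [h]
  exact MeasurableSet.iInter fun n =>
    measurableSet_pair_set (measurable_pi_apply n) (measurable_pi_apply (n + 1))
      (fun x y => ∃ e e' : E, x = some e ∧ y = some e' ∧ M.i e' = M.t e)

/-- `{σ | t(σ₀) = j}` (via `σ₀ ∈ E`), the past part of `T_j`. -/
def Qset (M : MarkovSystem K N E) (j : N) : Set (CodeSpace E) :=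
  {σ : CodeSpace E | ∃ e : E, σ 0 = some e ∧ M.t e = j}

lemma Qset_eq (M : MarkovSystem K N E) (j : N) :
    M.Qset j = ⋃ (e : E) (_ : M.t e = j), {σ : CodeSpace E | σ 0 = some e} := by
  ext σ; simp only [Qset, Set.mem_setOf_eq, Set.mem_iUnion]
  constructor
  · rintro ⟨e, h1, h2⟩; exact ⟨e, h2, h1⟩
  · rintro ⟨e, h2, h1⟩; exact ⟨e, h1, h2⟩

lemma measurableSet_Qset_past (M : MarkovSystem K N E) (j : N) :
    MeasurableSet[pastAlgebra E] (M.Qset j) := by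
  rw [Qset_eq]
  exact MeasurableSet.iUnion fun e => MeasurableSet.iUnion fun _ =>
    measurableSet_coord_past le_rfl (some e)

lemma measurableSet_Qset (M : MarkovSystem K N E) (j : N) : MeasurableSet (M.Qset j) := by
  rw [Qset_eq]
  refine MeasurableSet.iUnion fun e => MeasurableSet.iUnion fun _ => ?_
  show MeasurableSet ((fun σ : CodeSpace E => σ 0) ⁻¹' {some e})
  exact (measurable_pi_apply 0) (measurableSet_option' _)

lemma Tset_eq (M : MarkovSystem K N E) (j : N) : M.Tset j = M.pathSpace ∩ M.Qset j := rfl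

lemma measurableSet_Tset (M : MarkovSystem K N E) (j : N) : MeasurableSet (M.Tset j) := by
  rw [Tset_eq]
  exact M.measurableSet_pathSpace.inter (M.measurableSet_Qset j)

lemma codeDomain_eq (M : MarkovSystem K N E) (j0 : N) (xp : N → K) :
    M.codeDomain j0 xp = M.pathSpace ∩ M.convSet j0 xp := rfl

lemma measurableSet_codeDomain [CompleteSpace K] [BorelSpace K] (M : MarkovSystem K N E) (j0 : N) (xp : N → K) :
    MeasurableSet (M.codeDomain j0 xp) := by
  rw [codeDomain_eq]
  exact M.measurableSet_pathSpace.inter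
    (M.measurableSet_convSet j0 xp fun k _ => measurable_pi_apply k)

lemma tendsto_orbit_code (M : MarkovSystem K N E) (j0 : N) (xp : N → K) {σ : CodeSpace E}
    (h : σ ∈ M.codeDomain j0 xp) :
    Filter.Tendsto (fun n : ℕ => M.orbit j0 xp σ n) Filter.atTop (nhds (M.code j0 xp σ)) := by
  rw [code, dif_pos h]
  exact h.2.choose_spec

lemma code_eq_codeNeg (M : MarkovSystem K N E) (j0 : N) (xp : N → K) {σ : CodeSpace E}
    (h : σ ∈ M.codeDomain j0 xp) : M.code j0 xp σ = M.codeNegF j0 xp σ :=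
  tendsto_nhds_unique (M.tendsto_orbit_code j0 xp h) (M.tendsto_orbit_codeNeg j0 xp h.2)

lemma measurable_code [CompleteSpace K] [BorelSpace K] (M : MarkovSystem K N E)
    (j0 : N) (xp : N → K) : Measurable (M.code j0 xp) := by
  have hcd := M.measurableSet_codeDomain j0 xp
  have hf : ∀ n : ℕ, Measurable
      fun σ => if σ ∈ M.codeDomain j0 xp then M.orbit j0 xp σ n
        else xp (M.text j0 (σ 0)) := fun n =>
    Measurable.ite hcd (M.measurable_orbit j0 xp (fun k _ => measurable_pi_apply k) n)
      ((measurable_from_option (fun o => xp (M.text j0 o))).comp (measurable_pi_apply 0))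
  refine measurable_of_tendsto_metrizable' Filter.atTop hf (tendsto_pi_nhds.2 fun σ => ?_)
  by_cases h : σ ∈ M.codeDomain j0 xp
  · simp only [if_pos h]
    exact M.tendsto_orbit_code j0 xp h
  · simp only [if_neg h, code, dif_neg h]
    exact tendsto_const_nhds

lemma pathSpace_some (M : MarkovSystem K N E) {σ : CodeSpace E} (h : σ ∈ M.pathSpace) (n : ℤ) :
    ∃ e : E, σ n = some e := by
  rcases h n with ⟨e, e', h1, -, -⟩
  exact ⟨e, h1⟩

lemma iterW_mem (M : MarkovSystem K N E) :
    ∀ (n : ℕ) {σ : CodeSpace E}, σ ∈ M.pathSpace → ∀ {e0 : E}, σ 0 = some e0 →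
      ∀ {en : E}, σ (-(n : ℤ)) = some en → ∀ {y : K}, y ∈ M.Kset (M.i en) →
        M.iterW σ n y ∈ M.Kset (M.t e0) := by
  intro n
  induction n with
  | zero =>
    intro σ hσ e0 h0 en hn y hy
    have h00 : (-(0 : ℕ) : ℤ) = 0 := by norm_num
    rw [h00] at hn
    have : en = e0 := by rw [h0] at hn; exact (Option.some_injective E hn).symm
    subst this
    simp only [iterW_zero, h0]
    exact M.w_mapsTo en hy
  | succ n ih =>
    intro σ hσ e0 h0 en hn y hy
    rcases hσ (-(n + 1 : ℤ)) with ⟨e, e', he, he', hi⟩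
    have hcast : (-((n + 1 : ℕ) : ℤ)) = -(n + 1 : ℤ) := by push_cast; ring
    rw [hcast] at hn
    have hee : e = en := by rw [hn] at he; exact (Option.some_injective E he).symm
    subst hee
    have hstep : -(n + 1 : ℤ) + 1 = -(n : ℤ) := by ring
    rw [hstep] at he'
    simp only [iterW_succ]
    have hy' : M.wext (σ (-(n + 1 : ℤ))) y ∈ M.Kset (M.i e') := by
      rw [hn]
      show M.w e y ∈ M.Kset (M.i e')
      rw [hi]
      exact M.w_mapsTo e hy
    exact ih hσ h0 he' hy'

lemma orbit_mem (M : MarkovSystem K N E) (j0 : N) (xp : N → K) (hxp : ∀ j, xp j ∈ M.Kset j)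
    {σ : CodeSpace E} (hσ : σ ∈ M.pathSpace) {e0 : E} (h0 : σ 0 = some e0) (n : ℕ) :
    M.orbit j0 xp σ n ∈ M.Kset (M.t e0) := by
  rcases M.pathSpace_some hσ (-(n : ℤ)) with ⟨en, hn⟩
  unfold orbit
  refine M.iterW_mem n hσ h0 hn ?_
  rw [hn]
  exact hxp (M.i en)

lemma code_mem_closure (M : MarkovSystem K N E) (j0 : N) (xp : N → K)
    (hxp : ∀ j, xp j ∈ M.Kset j) {σ : CodeSpace E} (h : σ ∈ M.codeDomain j0 xp)
    {e0 : E} (h0 : σ 0 = some e0) :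
    M.code j0 xp σ ∈ closure (M.Kset (M.t e0)) :=
  mem_closure_of_tendsto (M.tendsto_orbit_code j0 xp h)
    (Filter.Eventually.of_forall fun n => M.orbit_mem j0 xp hxp h.1 h0 n)

lemma iterW_shift (M : MarkovSystem K N E) (σ : CodeSpace E) :
    ∀ (n : ℕ) (y : K), M.iterW (shiftMap E σ) (n + 1) y = M.wext (σ 1) (M.iterW σ n y) := by
  intro n
  induction n with
  | zero =>
    intro y
    rw [M.iterW_succ (shiftMap E σ) 0 y, iterW_zero, iterW_zero]
    simp only [shiftMap]
    norm_num
  | succ n ih =>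
    intro y
    rw [M.iterW_succ (shiftMap E σ) (n + 1) y, ih, M.iterW_succ σ n y]
    have hA : (shiftMap E σ) (-(((n + 1 : ℕ) : ℤ) + 1)) = σ (-((n : ℤ) + 1)) := by
      simp only [shiftMap]
      congr 1
      all_goals (push_cast; ring)
    rw [hA]

lemma orbit_shift (M : MarkovSystem K N E) (j0 : N) (xp : N → K) (σ : CodeSpace E) (n : ℕ) :
    M.orbit j0 xp (shiftMap E σ) (n + 1) = M.wext (σ 1) (M.orbit j0 xp σ n) := by
  unfold orbit
  have h1 : (shiftMap E σ) (-((n + 1 : ℕ) : ℤ)) = σ (-(n : ℤ)) := by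
    show σ (-((n + 1 : ℕ) : ℤ) + 1) = σ (-(n : ℤ))
    congr 1
    push_cast
    ring
  rw [h1, M.iterW_shift σ n]

lemma shiftMap_mem_pathSpace (M : MarkovSystem K N E) {σ : CodeSpace E}
    (h : σ ∈ M.pathSpace) : shiftMap E σ ∈ M.pathSpace := by
  intro n
  rcases h (n + 1) with ⟨e, e', h1, h2, h3⟩
  exact ⟨e, e', h1, h2, h3⟩

lemma uc_tendsto_w (M : MarkovSystem K N E) (huc : M.IsUniformlyContinuous) (e : E)
    {u : ℕ → K} {x : K} (hu : ∀ n, u n ∈ M.Kset (M.i e)) (hx : x ∈ M.Kset (M.i e))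
    (h : Filter.Tendsto u Filter.atTop (nhds x)) :
    Filter.Tendsto (fun n => M.w e (u n)) Filter.atTop (nhds (M.w e x)) := by
  have hcw : ContinuousWithinAt (M.w e) (M.Kset (M.i e)) x :=
    (huc e).1.continuousOn.continuousWithinAt hx
  exact hcw.tendsto.comp (tendsto_nhdsWithin_iff.2 ⟨h, Filter.Eventually.of_forall hu⟩)

/-- `B = ⋃_j (T_j ∩ F⁻¹(K_j))`. -/
def BsetM (M : MarkovSystem K N E) (j0 : N) (xp : N → K) : Set (CodeSpace E) :=
  ⋃ j : N, M.Tset j ∩ M.code j0 xp ⁻¹' M.Kset j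

lemma shift_mem_of_B (M : MarkovSystem K N E) (j0 : N) (xp : N → K)
    (hxp : ∀ j, xp j ∈ M.Kset j) (huc : M.IsUniformlyContinuous) {σ : CodeSpace E}
    (hD : σ ∈ M.codeDomain j0 xp) (hB : σ ∈ M.BsetM j0 xp) :
    shiftMap E σ ∈ M.codeDomain j0 xp ∧ shiftMap E σ ∈ M.BsetM j0 xp := by
  rcases Set.mem_iUnion.1 hB with ⟨j, hTj, hKj⟩
  obtain ⟨hpath, e0, h0, ht0⟩ := hTj
  rcases hpath 0 with ⟨e, e', h0', h1', hi⟩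
  have hee : e = e0 := by rw [h0] at h0'; exact (Option.some_injective E h0').symm
  subst hee
  have h1 : σ 1 = some e' := by rw [show (0 + 1 : ℤ) = 1 by norm_num] at h1'; exact h1'
  have hij : M.i e' = j := by rw [hi, ht0]
  have hKe' : M.code j0 xp σ ∈ M.Kset (M.i e') := by rw [hij]; exact hKj
  have horb : ∀ n, M.orbit j0 xp σ n ∈ M.Kset (M.i e') := fun n => by
    rw [hij]; rw [← ht0]; exact M.orbit_mem j0 xp hxp hpath h0 n
  have hten : Filter.Tendsto (fun n => M.w e' (M.orbit j0 xp σ n)) Filter.atTop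
      (nhds (M.w e' (M.code j0 xp σ))) :=
    M.uc_tendsto_w huc e' horb hKe' (M.tendsto_orbit_code j0 xp hD)
  have h2 : ∀ n : ℕ, M.orbit j0 xp (shiftMap E σ) (n + 1) = M.w e' (M.orbit j0 xp σ n) := by
    intro n
    rw [M.orbit_shift j0 xp σ n, h1]
    rfl
  have hten2 : Filter.Tendsto (fun n => M.orbit j0 xp (shiftMap E σ) n) Filter.atTop
      (nhds (M.w e' (M.code j0 xp σ))) := by
    rw [← tendsto_add_atTop_iff_nat 1]
    have : (fun n : ℕ => M.orbit j0 xp (shiftMap E σ) (n + 1)) =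
        fun n => M.w e' (M.orbit j0 xp σ n) := funext h2
    rw [this]
    exact hten
  have hDs : shiftMap E σ ∈ M.codeDomain j0 xp :=
    ⟨M.shiftMap_mem_pathSpace hpath, ⟨_, hten2⟩⟩
  have hcode : M.code j0 xp (shiftMap E σ) = M.w e' (M.code j0 xp σ) :=
    tendsto_nhds_unique (M.tendsto_orbit_code j0 xp hDs) hten2
  refine ⟨hDs, Set.mem_iUnion.2 ⟨M.t e', ⟨⟨M.shiftMap_mem_pathSpace hpath, e', ?_, rfl⟩, ?_⟩⟩⟩
  · show σ (0 + 1) = some e'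
    rw [show (0 + 1 : ℤ) = 1 by norm_num]
    exact h1
  · show M.code j0 xp (shiftMap E σ) ∈ M.Kset (M.t e')
    rw [hcode]
    exact M.w_mapsTo e' hKe'

lemma pbar_mem_Icc (M : MarkovSystem K N E) {pbar : E → K → ℝ} (hpbar : M.IsUCExtensionP pbar)
    (e : E) (x : K) : pbar e x ∈ Set.Icc (0 : ℝ) 1 := by
  by_cases hx : x ∈ closure (M.Kset (M.i e))
  · rcases mem_closure_iff_seq_limit.1 hx with ⟨u, hu, hul⟩
    have hct : Filter.Tendsto (fun n => pbar e (u n)) Filter.atTop (nhds (pbar e x)) :=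
      ((hpbar e).1.continuousWithinAt hx).tendsto.comp
        (tendsto_nhdsWithin_iff.2 ⟨hul, Filter.Eventually.of_forall fun n =>
          subset_closure (hu n)⟩)
    refine isClosed_Icc.mem_of_tendsto hct (Filter.Eventually.of_forall fun n => ?_)
    rw [(hpbar e).2.1 (u n) (hu n)]
    exact ⟨M.p_nonneg e (u n), M.p_le_one e (u n)⟩
  · rw [(hpbar e).2.2 x hx]
    exact ⟨le_rfl, zero_le_one⟩

lemma dp_mem_Icc (M : MarkovSystem K N E) {pbar : E → K → ℝ} (hpbar : M.IsUCExtensionP pbar)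
    (e : E) (x : K) : M.dp pbar e x ∈ Set.Icc (0 : ℝ) 1 := by
  unfold dp
  by_cases hx : x ∈ closure (M.Kset (M.i e)) \ M.Kset (M.i e)
  · rw [Set.indicator_of_mem hx]
    exact M.pbar_mem_Icc hpbar e x
  · rw [Set.indicator_of_notMem hx]
    exact ⟨le_rfl, zero_le_one⟩

lemma measurable_pbar [BorelSpace K] (M : MarkovSystem K N E) {pbar : E → K → ℝ}
    (hpbar : M.IsUCExtensionP pbar) (e : E) : Measurable (pbar e) := by
  classical
  have h : pbar e = (closure (M.Kset (M.i e))).piecewise (pbar e) (fun _ => 0) := by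
    funext x
    by_cases hx : x ∈ closure (M.Kset (M.i e))
    · rw [Set.piecewise_eq_of_mem _ _ _ hx]
    · rw [Set.piecewise_eq_of_notMem _ _ _ hx, (hpbar e).2.2 x hx]
  rw [h]
  exact ContinuousOn.measurable_piecewise (hpbar e).1 continuousOn_const
    isClosed_closure.measurableSet

lemma measurable_dp [BorelSpace K] (M : MarkovSystem K N E) {pbar : E → K → ℝ}
    (hpbar : M.IsUCExtensionP pbar) (e : E) : Measurable (M.dp pbar e) :=
  (M.measurable_pbar hpbar e).indicator
    (isClosed_closure.measurableSet.diff (M.Kset_measurable _))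

lemma measurableSet_BsetM [CompleteSpace K] [BorelSpace K] (M : MarkovSystem K N E)
    (j0 : N) (xp : N → K) [Countable N] : MeasurableSet (M.BsetM j0 xp) :=
  MeasurableSet.iUnion fun j => (M.measurableSet_Tset j).inter
    ((M.measurable_code j0 xp) (M.Kset_measurable j))

section MeasurePart

variable [Countable E] [Countable N] [CompleteSpace K] [BorelSpace K]

/-- The event `{σ₁ = e}`. -/
def cylE {E : Type*} (e : E) : Set (CodeSpace E) := {τ : CodeSpace E | τ 1 = some e}

lemma measurableSet_cylE {E : Type*} (e : E) : MeasurableSet (cylE e) := by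
  show MeasurableSet ((fun σ : CodeSpace E => σ 1) ⁻¹' {some e})
  exact (measurable_pi_apply 1) (measurableSet_option' _)

/-- `1_{σ₁ = e}` as a real function. -/
def feFun {E : Type*} (e : E) : CodeSpace E → ℝ := Set.indicator (cylE e) fun _ => (1 : ℝ)

/-- The past (`𝓕`-measurable) version of `B`. -/
def AsetM (M : MarkovSystem K N E) (j0 : N) (xp : N → K) : Set (CodeSpace E) :=
  ⋃ j : N, M.Qset j ∩ M.codeNegF j0 xp ⁻¹' M.Kset j

lemma measurableSet_AsetM_past (M : MarkovSystem K N E) (j0 : N) (xp : N → K) :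
    MeasurableSet[pastAlgebra E] (M.AsetM j0 xp) :=
  MeasurableSet.iUnion fun j => (M.measurableSet_Qset_past j).inter
    ((M.measurable_codeNeg j0 xp fun _ hk => measurable_coord_past hk) (M.Kset_measurable j))

variable {Λ : Measure (CodeSpace E)}

lemma ae_mem_codeDomain (M : MarkovSystem K N E) (j0 : N) (xp : N → K)
    (hprob : IsProbabilityMeasure Λ) (hD : Λ (M.codeDomain j0 xp) = 1) :
    ∀ᵐ σ ∂Λ, σ ∈ M.codeDomain j0 xp := by
  haveI := hprob
  have h0 : Λ (M.codeDomain j0 xp)ᶜ = 0 :=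
    (prob_compl_eq_zero_iff (M.measurableSet_codeDomain j0 xp)).2 hD
  exact MeasureTheory.ae_iff.2 h0

lemma measure_null_compl_D (M : MarkovSystem K N E) (j0 : N) (xp : N → K)
    (hprob : IsProbabilityMeasure Λ) (hD : Λ (M.codeDomain j0 xp) = 1)
    {s : Set (CodeSpace E)} (hs : s ⊆ (M.codeDomain j0 xp)ᶜ) : Λ s = 0 := by
  haveI := hprob
  refine le_antisymm (le_trans (measure_mono hs) (le_of_eq ?_)) (zero_le)
  exact (prob_compl_eq_zero_iff (M.measurableSet_codeDomain j0 xp)).2 hD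

lemma measure_preimage_shift (hinv : Measure.map (shiftMap E) Λ = Λ)
    {A : Set (CodeSpace E)} (hA : MeasurableSet A) : Λ (shiftMap E ⁻¹' A) = Λ A := by
  conv_rhs => rw [← hinv]
  rw [Measure.map_apply (measurable_shiftMap E) hA]

lemma measure_preimage_shift_iter (hinv : Measure.map (shiftMap E) Λ = Λ) (k : ℕ)
    {A : Set (CodeSpace E)} (hA : MeasurableSet A) :
    Λ ((shiftMap E)^[k] ⁻¹' A) = Λ A := by
  induction k with
  | zero => simp
  | succ k ih =>
    rw [Function.iterate_succ, Set.preimage_comp,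
      measure_preimage_shift hinv (((measurable_shiftMap E).iterate k) hA)]
    exact ih

lemma B_shift_symmDiff_null (M : MarkovSystem K N E) (j0 : N) (xp : N → K)
    (hxp : ∀ j, xp j ∈ M.Kset j) (huc : M.IsUniformlyContinuous)
    (hprob : IsProbabilityMeasure Λ) (hinv : Measure.map (shiftMap E) Λ = Λ)
    (hD : Λ (M.codeDomain j0 xp) = 1) :
    Λ (symmDiff (M.BsetM j0 xp) (shiftMap E ⁻¹' M.BsetM j0 xp)) = 0 := by
  haveI := hprob
  have hBm : MeasurableSet (M.BsetM j0 xp) := M.measurableSet_BsetM j0 xp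
  have hBm' : MeasurableSet (shiftMap E ⁻¹' M.BsetM j0 xp) := (measurable_shiftMap E) hBm
  have h1 : Λ (M.BsetM j0 xp \ shiftMap E ⁻¹' M.BsetM j0 xp) = 0 := by
    refine measure_null_compl_D M j0 xp hprob hD ?_
    intro σ hσ hDσ
    exact hσ.2 ((M.shift_mem_of_B j0 xp hxp huc hDσ hσ.1).2)
  have h3 : Λ (shiftMap E ⁻¹' M.BsetM j0 xp) = Λ (M.BsetM j0 xp) :=
    measure_preimage_shift hinv hBm
  have h2 : Λ (M.BsetM j0 xp) ≤ Λ (M.BsetM j0 xp ∩ shiftMap E ⁻¹' M.BsetM j0 xp) := by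
    calc Λ (M.BsetM j0 xp) ≤ Λ (M.BsetM j0 xp ∩ shiftMap E ⁻¹' M.BsetM j0 xp) +
        Λ (M.BsetM j0 xp \ shiftMap E ⁻¹' M.BsetM j0 xp) := measure_le_inter_add_diff Λ _ _
    _ = Λ (M.BsetM j0 xp ∩ shiftMap E ⁻¹' M.BsetM j0 xp) := by rw [h1, add_zero]
  have hint : Λ (shiftMap E ⁻¹' M.BsetM j0 xp ∩ M.BsetM j0 xp) = Λ (M.BsetM j0 xp) := by
    refine le_antisymm (le_trans (measure_mono Set.inter_subset_right) le_rfl) ?_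
    rw [Set.inter_comm]
    exact h2
  have h4 : Λ (shiftMap E ⁻¹' M.BsetM j0 xp \ M.BsetM j0 xp) = 0 := by
    have heq : shiftMap E ⁻¹' M.BsetM j0 xp \ M.BsetM j0 xp =
        shiftMap E ⁻¹' M.BsetM j0 xp \ (shiftMap E ⁻¹' M.BsetM j0 xp ∩ M.BsetM j0 xp) := by
      rw [Set.diff_self_inter]
    rw [heq, measure_diff Set.inter_subset_left (hBm'.inter hBm).nullMeasurableSet
      (measure_ne_top Λ _), hint, h3, tsub_self]
  rw [Set.symmDiff_def]
  exact measure_union_null h1 h4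

lemma B_iter_symmDiff_null (M : MarkovSystem K N E) (j0 : N) (xp : N → K)
    (hxp : ∀ j, xp j ∈ M.Kset j) (huc : M.IsUniformlyContinuous)
    (hprob : IsProbabilityMeasure Λ) (hinv : Measure.map (shiftMap E) Λ = Λ)
    (hD : Λ (M.codeDomain j0 xp) = 1) (k : ℕ) :
    Λ (symmDiff (M.BsetM j0 xp) ((shiftMap E)^[k] ⁻¹' M.BsetM j0 xp)) = 0 := by
  have hBm : MeasurableSet (M.BsetM j0 xp) := M.measurableSet_BsetM j0 xp
  induction k with
  | zero => simp
  | succ k ih =>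
    have hkm : MeasurableSet ((shiftMap E)^[k] ⁻¹' M.BsetM j0 xp) :=
      ((measurable_shiftMap E).iterate k) hBm
    refine le_antisymm (le_trans (measure_symmDiff_le _ (shiftMap E ⁻¹' M.BsetM j0 xp) _) ?_)
      (zero_le)
    rw [B_shift_symmDiff_null M j0 xp hxp huc hprob hinv hD, zero_add]
    have heq : (shiftMap E)^[k + 1] ⁻¹' M.BsetM j0 xp =
        shiftMap E ⁻¹' ((shiftMap E)^[k] ⁻¹' M.BsetM j0 xp) := by
      rw [Function.iterate_succ, Set.preimage_comp]
    rw [heq, ← Set.preimage_symmDiff,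
      measure_preimage_shift hinv (hBm.symmDiff hkm), ih]

lemma measure_Gset_eq_BsetM (M : MarkovSystem K N E) (j0 : N) (xp : N → K)
    (hxp : ∀ j, xp j ∈ M.Kset j) (huc : M.IsUniformlyContinuous)
    (hprob : IsProbabilityMeasure Λ) (hinv : Measure.map (shiftMap E) Λ = Λ)
    (hD : Λ (M.codeDomain j0 xp) = 1) :
    Λ (M.Gset j0 xp) = Λ (M.BsetM j0 xp) := by
  have hGeq : M.Gset j0 xp = ⋃ k : ℕ, (shiftMap E)^[k] ⁻¹' M.BsetM j0 xp := by
    ext σ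
    simp only [Gset, BsetM, Set.mem_iUnion, Set.mem_preimage, Set.mem_inter_iff]
    constructor
    · rintro ⟨k, j, h1, h2⟩; exact ⟨k, j, h2, h1⟩
    · rintro ⟨k, j, h1, h2⟩; exact ⟨k, j, h2, h1⟩
  refine le_antisymm ?_ ?_
  · rw [hGeq]
    have hsub : (⋃ k : ℕ, (shiftMap E)^[k] ⁻¹' M.BsetM j0 xp) ⊆
        M.BsetM j0 xp ∪ ⋃ k : ℕ, ((shiftMap E)^[k] ⁻¹' M.BsetM j0 xp \ M.BsetM j0 xp) := by
      intro σ hσ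
      rcases Set.mem_iUnion.1 hσ with ⟨k, hk⟩
      by_cases hB : σ ∈ M.BsetM j0 xp
      · exact Or.inl hB
      · exact Or.inr (Set.mem_iUnion.2 ⟨k, hk, hB⟩)
    refine le_trans (measure_mono hsub) (le_trans (measure_union_le _ _) ?_)
    have hzero : Λ (⋃ k : ℕ, ((shiftMap E)^[k] ⁻¹' M.BsetM j0 xp \ M.BsetM j0 xp)) = 0 := by
      refine measure_iUnion_null fun k => ?_
      refine le_antisymm (le_trans (measure_mono fun σ hσ => ?_)
        (le_of_eq (B_iter_symmDiff_null M j0 xp hxp huc hprob hinv hD k))) (zero_le)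
      exact Set.mem_symmDiff.2 (Or.inr ⟨hσ.1, hσ.2⟩)
    rw [hzero, add_zero]
  · refine measure_mono ?_
    rw [hGeq]
    intro σ hσ
    exact Set.mem_iUnion.2 ⟨0, by simpa using hσ⟩

lemma measure_BsetM_pos_iff (M : MarkovSystem K N E) (j0 : N) (xp : N → K) :
    0 < Λ (M.BsetM j0 xp) ↔
      ∃ i : N, 0 < Λ (M.Tset i ∩ M.code j0 xp ⁻¹' M.Kset i) := by
  constructor
  · intro h
    by_contra hc
    push_neg at hc
    have hz : ∀ i : N, Λ (M.Tset i ∩ M.code j0 xp ⁻¹' M.Kset i) = 0 :=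
      fun i => le_antisymm (hc i) (zero_le)
    have : Λ (M.BsetM j0 xp) ≤ ∑' j : N, Λ (M.Tset j ∩ M.code j0 xp ⁻¹' M.Kset j) :=
      measure_iUnion_le _
    rw [tsum_congr hz, tsum_zero] at this
    exact absurd (lt_of_lt_of_le h this) (lt_irrefl _)
  · rintro ⟨i, hi⟩
    exact lt_of_lt_of_le hi (measure_mono (Set.subset_iUnion
      (fun j => M.Tset j ∩ M.code j0 xp ⁻¹' M.Kset j) i))

lemma sigmaFinite_trim_prob (hprob : IsProbabilityMeasure Λ) :
    SigmaFinite (Λ.trim (pastAlgebra_le E)) := by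
  haveI := hprob
  haveI := isFiniteMeasure_trim (pastAlgebra_le E) (μ := Λ)
  infer_instance

lemma integrable_feFun (hprob : IsProbabilityMeasure Λ) (e : E) : Integrable (feFun e) Λ := by
  haveI := hprob
  exact (integrable_const (1 : ℝ)).indicator (measurableSet_cylE e)

lemma setIntegral_feFun (e : E) {s : Set (CodeSpace E)} :
    ∫ σ in s, feFun e σ ∂Λ = (Λ (s ∩ cylE e)).toReal := by
  rw [feFun, setIntegral_indicator (measurableSet_cylE e), setIntegral_const]
  simp
  rfl

lemma setIntegral_condexp_feFun (hprob : IsProbabilityMeasure Λ) (e : E)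
    {s : Set (CodeSpace E)} (hs : MeasurableSet[pastAlgebra E] s) :
    ∫ σ in s, (Λ[feFun e|pastAlgebra E]) σ ∂Λ = (Λ (s ∩ cylE e)).toReal := by
  haveI := hprob
  haveI := sigmaFinite_trim_prob (Λ := Λ) hprob
  rw [setIntegral_condExp (pastAlgebra_le E) (integrable_feFun hprob e) hs]
  exact setIntegral_feFun e

lemma Bj_symmDiff_Aj_null (M : MarkovSystem K N E) (j0 : N) (xp : N → K)
    (hprob : IsProbabilityMeasure Λ) (hD : Λ (M.codeDomain j0 xp) = 1) (j : N) :
    Λ (symmDiff (M.Tset j ∩ M.code j0 xp ⁻¹' M.Kset j)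
      (M.Qset j ∩ M.codeNegF j0 xp ⁻¹' M.Kset j)) = 0 := by
  refine measure_null_compl_D M j0 xp hprob hD ?_
  intro σ hσ hDσ
  rcases Set.mem_symmDiff.1 hσ with ⟨h1, h2⟩ | ⟨h1, h2⟩
  · refine h2 ⟨h1.1.2, ?_⟩
    show M.codeNegF j0 xp σ ∈ M.Kset j
    rw [← M.code_eq_codeNeg j0 xp hDσ]
    exact h1.2
  · refine h2 ⟨⟨hDσ.1, h1.1⟩, ?_⟩
    show M.code j0 xp σ ∈ M.Kset j
    rw [M.code_eq_codeNeg j0 xp hDσ]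
    exact h1.2

lemma measure_split_cylE (M : MarkovSystem K N E) (j0 : N) (xp : N → K)
    (hprob : IsProbabilityMeasure Λ) (hD : Λ (M.codeDomain j0 xp) = 1)
    {A : Set (CodeSpace E)} (hA : MeasurableSet A) :
    Λ A = ∑' e : E, Λ (A ∩ cylE e) := by
  haveI := hprob
  have hU : Λ (A \ ⋃ e : E, cylE e) = 0 := by
    refine measure_null_compl_D M j0 xp hprob hD ?_
    rintro σ ⟨hσA, hσU⟩ hσD
    rcases M.pathSpace_some hσD.1 1 with ⟨e, he⟩
    exact hσU (Set.mem_iUnion.2 ⟨e, he⟩)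
  have hAeq : Λ A = Λ (⋃ e : E, A ∩ cylE e) := by
    refine le_antisymm ?_ (measure_mono (Set.iUnion_subset fun e => Set.inter_subset_left))
    have hsub : A ⊆ (⋃ e : E, A ∩ cylE e) ∪ (A \ ⋃ e : E, cylE e) := by
      intro σ hσ
      by_cases h : σ ∈ ⋃ e : E, cylE e
      · rcases Set.mem_iUnion.1 h with ⟨e, he⟩
        exact Or.inl (Set.mem_iUnion.2 ⟨e, hσ, he⟩)
      · exact Or.inr ⟨hσ, h⟩
    refine le_trans (measure_mono hsub) (le_trans (measure_union_le _ _) ?_)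
    rw [hU, add_zero]
  rw [hAeq]
  refine measure_iUnion ?_ fun e => hA.inter (measurableSet_cylE e)
  intro e1 e2 hne
  refine Set.disjoint_left.2 fun σ h1 h2 => hne ?_
  have h1' : σ 1 = some e1 := h1.2
  have h2' : σ 1 = some e2 := h2.2
  rw [h1'] at h2'
  exact Option.some_injective E h2'

lemma perp_Bj_null (M : MarkovSystem K N E) (j0 : N) (xp : N → K) (pbar : E → K → ℝ)
    (hperp : M.IsPerp j0 xp pbar Λ) (j : N) :
    Λ (M.Tset j ∩ M.code j0 xp ⁻¹' M.Kset j) = 0 := by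
  obtain ⟨hprob, hinv, hD, hcond⟩ := hperp
  haveI := hprob
  set Aj := M.Qset j ∩ M.codeNegF j0 xp ⁻¹' M.Kset j with hAjdef
  have hAjF : MeasurableSet[pastAlgebra E] Aj :=
    (M.measurableSet_Qset_past j).inter
      ((M.measurable_codeNeg j0 xp fun _ hk => measurable_coord_past hk) (M.Kset_measurable j))
  have hAjm : MeasurableSet Aj := pastAlgebra_le E _ hAjF
  have hBA : Λ (M.Tset j ∩ M.code j0 xp ⁻¹' M.Kset j) = Λ Aj :=
    measure_congr (measure_symmDiff_eq_zero_iff.1 (Bj_symmDiff_Aj_null M j0 xp hprob hD j))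
  rw [hBA, measure_split_cylE M j0 xp hprob hD hAjm]
  have hz : ∀ e : E, Λ (Aj ∩ cylE e) = 0 := by
    intro e
    have h1 : (Λ (Aj ∩ cylE e)).toReal = ∫ σ in Aj, (Λ[feFun e|pastAlgebra E]) σ ∂Λ :=
      (setIntegral_condexp_feFun hprob e hAjF).symm
    have h2 : ∫ σ in Aj, (Λ[feFun e|pastAlgebra E]) σ ∂Λ =
        ∫ σ in Aj, Set.indicator (M.Tset (M.i e))
          (fun σ => M.dp pbar e (M.code j0 xp σ)) σ ∂Λ :=
      integral_congr_ae (ae_restrict_of_ae (hcond e))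
    have h3 : ∫ σ in Aj, Set.indicator (M.Tset (M.i e))
        (fun σ => M.dp pbar e (M.code j0 xp σ)) σ ∂Λ = 0 := by
      have hz' : ∀ᵐ σ ∂Λ, σ ∈ Aj → Set.indicator (M.Tset (M.i e))
          (fun σ => M.dp pbar e (M.code j0 xp σ)) σ = 0 := by
        filter_upwards [ae_mem_codeDomain M j0 xp hprob hD] with σ hσD hσA
        by_cases hT : σ ∈ M.Tset (M.i e)
        · rw [Set.indicator_of_mem hT]
          obtain ⟨hpath, e0, h0, ht0⟩ := hT
          obtain ⟨e1, h1, ht1⟩ := hσA.1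
          have he01 : e0 = e1 := by rw [h0] at h1; exact Option.some_injective E h1
          have hij : M.i e = j := by rw [← ht0, he01, ht1]
          have hcK : M.code j0 xp σ ∈ M.Kset (M.i e) := by
            rw [M.code_eq_codeNeg j0 xp hσD, hij]
            exact hσA.2
          unfold dp
          exact Set.indicator_of_notMem (fun hmem => hmem.2 hcK) _
        · rw [Set.indicator_of_notMem hT]
      rw [integral_congr_ae ((ae_restrict_iff' hAjm).2 hz')]
      simp
    have h4 : (Λ (Aj ∩ cylE e)).toReal = 0 := by rw [h1, h2, h3]
    rcases (ENNReal.toReal_eq_zero_iff _).1 h4 with h | h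
    · exact h
    · exact absurd h (measure_ne_top Λ _)
  rw [tsum_congr hz, tsum_zero]

lemma perp_B_null (M : MarkovSystem K N E) (j0 : N) (xp : N → K) (pbar : E → K → ℝ)
    (hperp : M.IsPerp j0 xp pbar Λ) : Λ (M.BsetM j0 xp) = 0 := by
  refine measure_iUnion_null fun j => perp_Bj_null M j0 xp pbar hperp j

lemma target_swap (M : MarkovSystem K N E) (j0 : N) (xp : N → K) (pbar : E → K → ℝ)
    (hxp : ∀ j, xp j ∈ M.Kset j) (hprob : IsProbabilityMeasure Λ)
    (hD : Λ (M.codeDomain j0 xp) = 1) (hB : Λ (M.BsetM j0 xp) = 0) (e : E) :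
    (Set.indicator (M.Tset (M.i e)) fun σ => pbar e (M.code j0 xp σ)) =ᵐ[Λ]
      Set.indicator (M.Tset (M.i e)) fun σ => M.dp pbar e (M.code j0 xp σ) := by
  filter_upwards [ae_mem_codeDomain M j0 xp hprob hD, measure_eq_zero_iff_ae_notMem.1 hB]
    with σ hσD hσB
  by_cases hT : σ ∈ M.Tset (M.i e)
  · rw [Set.indicator_of_mem hT, Set.indicator_of_mem hT]
    obtain ⟨hpath, e0, h0, ht0⟩ := hT
    have hcl : M.code j0 xp σ ∈ closure (M.Kset (M.i e)) := by
      rw [← ht0]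
      exact M.code_mem_closure j0 xp hxp hσD h0
    have hnK : M.code j0 xp σ ∉ M.Kset (M.i e) := by
      intro hK
      refine hσB (Set.mem_iUnion.2 ⟨M.i e, ?_⟩)
      exact Set.mem_inter ⟨hpath, e0, h0, ht0⟩ hK
    have hmem : M.code j0 xp σ ∈ closure (M.Kset (M.i e)) \ M.Kset (M.i e) := ⟨hcl, hnK⟩
    unfold dp
    rw [Set.indicator_of_mem hmem]
  · rw [Set.indicator_of_notMem hT, Set.indicator_of_notMem hT]

lemma asym_of_perp_Bnull (M : MarkovSystem K N E) (j0 : N) (xp : N → K) (pbar : E → K → ℝ)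
    (hxp : ∀ j, xp j ∈ M.Kset j) (hperp : M.IsPerp j0 xp pbar Λ) :
    M.IsAsymptotic j0 xp pbar Λ := by
  have hB : Λ (M.BsetM j0 xp) = 0 := perp_B_null M j0 xp pbar hperp
  obtain ⟨hprob, hinv, hD, hcond⟩ := hperp
  exact ⟨hprob, hinv, hD, fun e => (hcond e).trans
    (target_swap M j0 xp pbar hxp hprob hD hB e).symm⟩

lemma perp_of_asym_Bnull (M : MarkovSystem K N E) (j0 : N) (xp : N → K) (pbar : E → K → ℝ)
    (hxp : ∀ j, xp j ∈ M.Kset j) (hasym : M.IsAsymptotic j0 xp pbar Λ)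
    (hB : Λ (M.BsetM j0 xp) = 0) : M.IsPerp j0 xp pbar Λ := by
  obtain ⟨hprob, hinv, hD, hcond⟩ := hasym
  exact ⟨hprob, hinv, hD, fun e => (hcond e).trans
    (target_swap M j0 xp pbar hxp hprob hD hB e)⟩

lemma equil_B_one (M : MarkovSystem K N E) (j0 : N) (xp : N → K)
    (heq : M.IsEquilibrium j0 xp Λ) : Λ (M.BsetM j0 xp) = 1 := by
  obtain ⟨hprob, hinv, hD, hcond⟩ := heq
  haveI := hprob
  haveI := sigmaFinite_trim_prob (Λ := Λ) hprob
  have hae : ∀ e : E, ∀ᵐ σ ∂Λ, σ ∉ M.Qset (M.i e) → M.p e (M.code j0 xp σ) = 0 := by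
    intro e
    have hQF : MeasurableSet[pastAlgebra E] (M.Qset (M.i e))ᶜ :=
      (M.measurableSet_Qset_past _).compl
    have hQm : MeasurableSet (M.Qset (M.i e))ᶜ := (M.measurableSet_Qset _).compl
    have h1 : Λ ((M.Qset (M.i e))ᶜ ∩ cylE e) = 0 := by
      refine measure_null_compl_D M j0 xp hprob hD ?_
      rintro σ ⟨hQc, hcyl⟩ hσD
      rcases hσD.1 0 with ⟨e0, e1, h0, h1, hi⟩
      have h1' : σ 1 = some e1 := by
        rw [show (0 + 1 : ℤ) = 1 by norm_num] at h1
        exact h1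
      have he1 : e1 = e := by
        rw [hcyl] at h1'
        exact (Option.some_injective E h1').symm
      exact hQc ⟨e0, h0, by rw [← hi, he1]⟩
    have h2 : ∫ σ in (M.Qset (M.i e))ᶜ, (Λ[feFun e|pastAlgebra E]) σ ∂Λ = 0 := by
      rw [setIntegral_condexp_feFun hprob e hQF, h1]
      simp
    have h3 : 0 ≤ᵐ[Λ] Λ[feFun e|pastAlgebra E] :=
      condExp_nonneg (Filter.Eventually.of_forall fun σ =>
        Set.indicator_nonneg (fun _ _ => zero_le_one) σ)
    have h4 : (Λ[feFun e|pastAlgebra E]) =ᵐ[Λ.restrict (M.Qset (M.i e))ᶜ] 0 :=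
      (setIntegral_eq_zero_iff_of_nonneg_ae (ae_restrict_of_ae h3)
        integrable_condExp.integrableOn).1 h2
    have h5' : (Λ[feFun e|pastAlgebra E]) =ᵐ[Λ.restrict (M.Qset (M.i e))ᶜ]
        fun σ => M.p e (M.code j0 xp σ) := ae_restrict_of_ae (hcond e)
    have h5 : (fun σ => M.p e (M.code j0 xp σ)) =ᵐ[Λ.restrict (M.Qset (M.i e))ᶜ] 0 :=
      h5'.symm.trans h4
    exact (ae_restrict_iff' hQm).1 h5
  have hBfull : ∀ᵐ σ ∂Λ, σ ∈ M.BsetM j0 xp := by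
    filter_upwards [ae_mem_codeDomain M j0 xp hprob hD, ae_all_iff.2 hae] with σ hσD hpz
    rcases M.pathSpace_some hσD.1 0 with ⟨e0, h0⟩
    have hcov : M.code j0 xp σ ∈ ⋃ j : N, M.Kset j := by
      rw [M.Kset_cover]
      trivial
    rcases Set.mem_iUnion.1 hcov with ⟨j', hj'⟩
    have hsum := M.p_tsum_one j' _ hj'
    have hex : ∃ e : {e : E // M.i e = j'}, M.p e.val (M.code j0 xp σ) ≠ 0 := by
      by_contra hc
      push_neg at hc
      rw [tsum_congr (fun e => hc e), tsum_zero] at hsum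
      exact one_ne_zero hsum.symm
    rcases hex with ⟨⟨e, hie⟩, hpe⟩
    have hQ : σ ∈ M.Qset (M.i e) := by
      by_contra hq
      exact hpe (hpz e hq)
    rcases hQ with ⟨e1, h1, ht1⟩
    have he1 : e1 = e0 := by
      rw [h0] at h1
      exact (Option.some_injective E h1).symm
    have htj : M.t e0 = j' := by rw [← he1, ht1, hie]
    exact Set.mem_iUnion.2 ⟨M.t e0, ⟨⟨hσD.1, e0, h0, rfl⟩, by
      show M.code j0 xp σ ∈ M.Kset (M.t e0)
      rw [htj]
      exact hj'⟩⟩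
  have huniv : Λ (M.BsetM j0 xp) = Λ Set.univ :=
    measure_congr (Filter.eventuallyEq_univ.2 hBfull)
  rw [huniv, measure_univ]

lemma equil_target_eq (M : MarkovSystem K N E) (j0 : N) (xp : N → K) (pbar : E → K → ℝ)
    (hxp : ∀ j, xp j ∈ M.Kset j) (hpbar : M.IsUCExtensionP pbar)
    (hprob : IsProbabilityMeasure Λ) (hD : Λ (M.codeDomain j0 xp) = 1)
    (hB1 : Λ (M.BsetM j0 xp) = 1) (e : E) :
    (fun σ => M.p e (M.code j0 xp σ)) =ᵐ[Λ]
      Set.indicator (M.Tset (M.i e)) fun σ => pbar e (M.code j0 xp σ) := by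
  haveI := hprob
  have hBfull : ∀ᵐ σ ∂Λ, σ ∈ M.BsetM j0 xp := by
    have h0 : Λ (M.BsetM j0 xp)ᶜ = 0 :=
      (prob_compl_eq_zero_iff (M.measurableSet_BsetM j0 xp)).2 hB1
    exact MeasureTheory.ae_iff.2 h0
  filter_upwards [hBfull, ae_mem_codeDomain M j0 xp hprob hD] with σ hσB hσD
  rcases Set.mem_iUnion.1 hσB with ⟨j, ⟨⟨hpath, e0, h0, ht0⟩, hK⟩⟩
  by_cases hie : M.t e0 = M.i e
  · have hT : σ ∈ M.Tset (M.i e) := ⟨hpath, e0, h0, hie⟩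
    rw [Set.indicator_of_mem hT]
    have hKie : M.code j0 xp σ ∈ M.Kset (M.i e) := by
      rw [← hie, ht0]
      exact hK
    rw [(hpbar e).2.1 _ hKie]
  · have hT : σ ∉ M.Tset (M.i e) := by
      rintro ⟨-, e0', h0', ht0'⟩
      have : e0' = e0 := by rw [h0] at h0'; exact (Option.some_injective E h0').symm
      rw [this] at ht0'
      exact hie ht0'
    rw [Set.indicator_of_notMem hT]
    refine M.p_zero_outside e _ fun hKie => ?_
    have hjne : M.i e ≠ j := by
      rw [← ht0]
      exact fun hh => hie hh.symm
    exact Set.disjoint_left.1 (M.Kset_disjoint hjne) hKie hK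

lemma conditioned_asym (M : MarkovSystem K N E) (j0 : N) (xp : N → K) (pbar : E → K → ℝ)
    (hxp : ∀ j, xp j ∈ M.Kset j) (huc : M.IsUniformlyContinuous)
    (hpbar : M.IsUCExtensionP pbar) (hasym : M.IsAsymptotic j0 xp pbar Λ)
    (hBne : Λ (M.BsetM j0 xp) ≠ 1) :
    ∃ Λ' : Measure (CodeSpace E), M.IsAsymptotic j0 xp pbar Λ' ∧ Λ' (M.BsetM j0 xp) = 0 := by
  classical
  obtain ⟨hprob, hinv, hD, hcond⟩ := hasym
  haveI := hprob
  haveI := sigmaFinite_trim_prob (Λ := Λ) hprob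
  have hDm : MeasurableSet (M.codeDomain j0 xp) := M.measurableSet_codeDomain j0 xp
  have hBm : MeasurableSet (M.BsetM j0 xp) := M.measurableSet_BsetM j0 xp
  have hAF : MeasurableSet[pastAlgebra E] (M.AsetM j0 xp) := measurableSet_AsetM_past M j0 xp
  have hAm : MeasurableSet (M.AsetM j0 xp) := pastAlgebra_le E _ hAF
  have hABnull : Λ (symmDiff (M.AsetM j0 xp) (M.BsetM j0 xp)) = 0 := by
    refine measure_null_compl_D M j0 xp hprob hD ?_
    intro σ hσ hσD
    rcases Set.mem_symmDiff.1 hσ with ⟨h1, h2⟩ | ⟨h1, h2⟩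
    · rcases Set.mem_iUnion.1 h1 with ⟨j, hj⟩
      refine h2 (Set.mem_iUnion.2 ⟨j, Set.mem_inter ⟨hσD.1, hj.1⟩ ?_⟩)
      show M.code j0 xp σ ∈ M.Kset j
      rw [M.code_eq_codeNeg j0 xp hσD]
      exact hj.2
    · rcases Set.mem_iUnion.1 h1 with ⟨j, hj⟩
      refine h2 (Set.mem_iUnion.2 ⟨j, Set.mem_inter hj.1.2 ?_⟩)
      show M.codeNegF j0 xp σ ∈ M.Kset j
      rw [← M.code_eq_codeNeg j0 xp hσD]
      exact hj.2
  have hABae : M.AsetM j0 xp =ᵐ[Λ] M.BsetM j0 xp := measure_symmDiff_eq_zero_iff.1 hABnull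
  have hΛA : Λ (M.AsetM j0 xp) = Λ (M.BsetM j0 xp) := measure_congr hABae
  set W := (M.AsetM j0 xp)ᶜ with hWdef
  have hWF : MeasurableSet[pastAlgebra E] W := hAF.compl
  have hWm : MeasurableSet W := hAm.compl
  have hΛW : Λ W = 1 - Λ (M.BsetM j0 xp) := by
    rw [hWdef, measure_compl hAm (measure_ne_top Λ _), measure_univ, hΛA]
  have hWpos : Λ W ≠ 0 := by
    rw [hΛW]
    intro hcontr
    have hle : (1 : ℝ≥0∞) ≤ Λ (M.BsetM j0 xp) := tsub_eq_zero_iff_le.1 hcontr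
    exact hBne (le_antisymm prob_le_one hle)
  have hWtop : Λ W ≠ ⊤ := measure_ne_top Λ W
  set c : ℝ≥0∞ := (Λ W)⁻¹ with hcdef
  set Λ' : Measure (CodeSpace E) := c • Λ.restrict W with hΛ'def
  have happ : ∀ {s : Set (CodeSpace E)}, MeasurableSet s → Λ' s = c * Λ (s ∩ W) := by
    intro s hs
    rw [hΛ'def, Measure.smul_apply, Measure.restrict_apply hs, smul_eq_mul]
  haveI hprob' : IsProbabilityMeasure Λ' := by
    constructor
    rw [happ MeasurableSet.univ, Set.univ_inter, hcdef]
    exact ENNReal.inv_mul_cancel hWpos hWtop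
  have hBW : Λ (M.BsetM j0 xp ∩ W) = 0 := by
    refine le_antisymm (le_trans (measure_mono ?_) (le_of_eq hABnull)) (zero_le)
    intro σ hσ
    exact Set.mem_symmDiff.2 (Or.inr ⟨hσ.1, hσ.2⟩)
  have hBsym := B_shift_symmDiff_null M j0 xp hxp huc hprob hinv hD
  have hWsym : Λ (symmDiff W (shiftMap E ⁻¹' W)) = 0 := by
    have h1 : symmDiff W (shiftMap E ⁻¹' W) =
        symmDiff (M.AsetM j0 xp) (shiftMap E ⁻¹' M.AsetM j0 xp) := by
      rw [hWdef, Set.preimage_compl, compl_symmDiff_compl]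
    rw [h1]
    refine le_antisymm (le_trans (measure_symmDiff_le _ (M.BsetM j0 xp) _) ?_) (zero_le)
    rw [hABnull, zero_add]
    refine le_trans (measure_symmDiff_le _ (shiftMap E ⁻¹' M.BsetM j0 xp) _) ?_
    rw [hBsym, zero_add, ← Set.preimage_symmDiff,
      measure_preimage_shift hinv (hBm.symmDiff hAm), symmDiff_comm, hABnull]
  have hWae : W =ᵐ[Λ] shiftMap E ⁻¹' W := measure_symmDiff_eq_zero_iff.1 hWsym
  have hinterW : ∀ X : Set (CodeSpace E), Λ (X ∩ W) = Λ (X ∩ shiftMap E ⁻¹' W) := by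
    intro X
    exact measure_congr (MeasureTheory.ae_eq_set_inter Filter.EventuallyEq.rfl hWae)
  have hinv' : Measure.map (shiftMap E) Λ' = Λ' := by
    refine Measure.ext fun s hs => ?_
    rw [Measure.map_apply (measurable_shiftMap E) hs, happ ((measurable_shiftMap E) hs), happ hs]
    congr 1
    calc Λ (shiftMap E ⁻¹' s ∩ W) = Λ (shiftMap E ⁻¹' s ∩ shiftMap E ⁻¹' W) := hinterW _
      _ = Λ (shiftMap E ⁻¹' (s ∩ W)) := by rw [Set.preimage_inter]
      _ = Λ (s ∩ W) := measure_preimage_shift hinv (hs.inter hWm)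
  have hDW : Λ (M.codeDomain j0 xp ∩ W) = Λ W := by
    refine le_antisymm (measure_mono Set.inter_subset_right) ?_
    calc Λ W ≤ Λ (W ∩ M.codeDomain j0 xp) + Λ (W \ M.codeDomain j0 xp) :=
          measure_le_inter_add_diff Λ _ _
      _ = Λ (M.codeDomain j0 xp ∩ W) := by
          rw [measure_null_compl_D M j0 xp hprob hD
            (s := W \ M.codeDomain j0 xp) (fun σ hσ => hσ.2), add_zero, Set.inter_comm]
  have hD' : Λ' (M.codeDomain j0 xp) = 1 := by
    rw [happ hDm, hDW, hcdef]
    exact ENNReal.inv_mul_cancel hWpos hWtop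
  have hae' : ∀ {p : CodeSpace E → Prop}, (∀ᵐ σ ∂Λ, p σ) → ∀ᵐ σ ∂Λ', p σ := by
    intro p hp
    rw [MeasureTheory.ae_iff] at hp ⊢
    rw [hΛ'def, Measure.smul_apply, smul_eq_mul]
    have hle : Λ.restrict W {a | ¬p a} ≤ Λ {a | ¬p a} := Measure.restrict_apply_le _ _
    rw [hp] at hle
    rw [le_antisymm hle (zero_le), mul_zero]
  haveI hsf' : SigmaFinite (Λ'.trim (pastAlgebra_le E)) := sigmaFinite_trim_prob hprob'
  have hcond' : ∀ e : E,
      (Λ'[Set.indicator {σ : CodeSpace E | σ 1 = some e} (fun _ => (1 : ℝ)) | pastAlgebra E])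
        =ᵐ[Λ'] Set.indicator (M.Tset (M.i e)) fun σ => pbar e (M.code j0 xp σ) := by
    intro e
    have hcondf : (Λ[feFun e|pastAlgebra E]) =ᵐ[Λ]
        Set.indicator (M.Tset (M.i e)) fun σ => pbar e (M.code j0 xp σ) := hcond e
    set g : CodeSpace E → ℝ :=
      Set.indicator (M.Tset (M.i e)) fun σ => pbar e (M.code j0 xp σ) with hgdef
    set g' : CodeSpace E → ℝ :=
      Set.indicator (M.Qset (M.i e)) fun σ => pbar e (M.codeNegF j0 xp σ) with hg'def
    have hg'sm : StronglyMeasurable[pastAlgebra E] g' := by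
      refine Measurable.stronglyMeasurable ?_
      exact Measurable.indicator
        ((M.measurable_pbar hpbar e).comp
          (M.measurable_codeNeg j0 xp fun _ hk => measurable_coord_past hk))
        (M.measurableSet_Qset_past _)
    have hggD : ∀ σ, σ ∈ M.codeDomain j0 xp → g σ = g' σ := by
      intro σ hσD
      by_cases hQ : σ ∈ M.Qset (M.i e)
      · have hT : σ ∈ M.Tset (M.i e) := ⟨hσD.1, hQ⟩
        rw [hgdef, hg'def, Set.indicator_of_mem hT, Set.indicator_of_mem hQ,
          M.code_eq_codeNeg j0 xp hσD]
      · have hT : σ ∉ M.Tset (M.i e) := fun hT => hQ hT.2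
        rw [hgdef, hg'def, Set.indicator_of_notMem hT, Set.indicator_of_notMem hQ]
    have hggΛ : g =ᵐ[Λ] g' := by
      filter_upwards [ae_mem_codeDomain M j0 xp hprob hD] with σ h using hggD σ h
    have hggΛ' : g =ᵐ[Λ'] g' := hae' hggΛ
    have hgbd : ∀ σ, ‖g σ‖ ≤ 1 := by
      intro σ
      rw [hgdef, Real.norm_eq_abs]
      by_cases hT : σ ∈ M.Tset (M.i e)
      · rw [Set.indicator_of_mem hT]
        rcases M.pbar_mem_Icc hpbar e (M.code j0 xp σ) with ⟨hl, hu⟩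
        rw [abs_le]
        exact ⟨by linarith, hu⟩
      · rw [Set.indicator_of_notMem hT]
        simp
    have hgint : Integrable g Λ' := by
      refine ⟨((hg'sm.mono (pastAlgebra_le E)).aestronglyMeasurable).congr hggΛ'.symm, ?_⟩
      exact HasFiniteIntegral.of_bounded (C := 1) (Filter.Eventually.of_forall hgbd)
    refine (ae_eq_condExp_of_forall_setIntegral_eq (pastAlgebra_le E)
      (integrable_feFun hprob' e) (fun s _ _ => hgint.integrableOn)
      (fun s hs _ => ?_) ⟨g', hg'sm, hggΛ'⟩).symm
    have hsm : MeasurableSet s := pastAlgebra_le E _ hs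
    have hsWF : MeasurableSet[pastAlgebra E] (s ∩ W) := hs.inter hWF
    calc ∫ σ in s, g σ ∂Λ'
        = c.toReal • ∫ σ in s ∩ W, g σ ∂Λ := by
          rw [hΛ'def, Measure.restrict_smul, integral_smul_measure,
            Measure.restrict_restrict hsm]
      _ = c.toReal • ∫ σ in s ∩ W, (Λ[feFun e|pastAlgebra E]) σ ∂Λ := by
          have hx : ∫ σ in s ∩ W, g σ ∂Λ =
              ∫ σ in s ∩ W, (Λ[feFun e|pastAlgebra E]) σ ∂Λ :=
            integral_congr_ae (ae_restrict_of_ae hcondf.symm)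
          rw [hx]
      _ = c.toReal • ∫ σ in s ∩ W, feFun e σ ∂Λ := by
          rw [setIntegral_condExp (pastAlgebra_le E) (integrable_feFun hprob e) hsWF]
      _ = ∫ σ in s, feFun e σ ∂Λ' := by
          rw [hΛ'def, Measure.restrict_smul, integral_smul_measure,
            Measure.restrict_restrict hsm]
  refine ⟨Λ', ⟨hprob', hinv', hD', hcond'⟩, ?_⟩
  rw [happ hBm, hBW, mul_zero]

end MeasurePart

end MarkovSystem

end NDAux

end


variable {K : Type*} [MetricSpace K] [CompleteSpace K] [MeasurableSpace K] [BorelSpace K]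
  {N E : Type*} [Countable N] [Countable E]

/-- For a uniformly continuous Markov system the following are equivalent:
(i) `M` is non-degenerate; (ii) `M(G) > 0` for all `M ∈ Ẽ(M)`; (iii) `E_⊥(M) = ∅`;
(iv) `Ẽ(M) = E(M)`; (v) `M(G) = 1` for all `M ∈ Ẽ(M)`. -/
theorem nondegeneracy_tfae
    (M : MarkovSystem K N E) (j0 : N) (xp : N → K) (hxp : ∀ j, xp j ∈ M.Kset j)
    (huc : M.IsUniformlyContinuous)
    (pbar : E → K → ℝ) (hpbar : M.IsUCExtensionP pbar) :
    List.TFAE [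
      M.IsNonDegenerate j0 xp pbar,
      ∀ Λ : Measure (CodeSpace E), M.IsAsymptotic j0 xp pbar Λ → 0 < Λ (M.Gset j0 xp),
      ∀ Λ : Measure (CodeSpace E), ¬ M.IsPerp j0 xp pbar Λ,
      (∀ Λ : Measure (CodeSpace E), M.IsAsymptotic j0 xp pbar Λ ↔ M.IsEquilibrium j0 xp Λ),
      ∀ Λ : Measure (CodeSpace E), M.IsAsymptotic j0 xp pbar Λ → Λ (M.Gset j0 xp) = 1] := by
  have h12 : M.IsNonDegenerate j0 xp pbar →
      ∀ Λ : Measure (CodeSpace E), M.IsAsymptotic j0 xp pbar Λ → 0 < Λ (M.Gset j0 xp) := by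
    intro h1 Λ hasym
    have h' := hasym
    obtain ⟨hprob, hinv, hD, -⟩ := h'
    rw [MarkovSystem.measure_Gset_eq_BsetM M j0 xp hxp huc hprob hinv hD]
    exact (MarkovSystem.measure_BsetM_pos_iff M j0 xp).2 (h1 Λ hasym)
  have h23 : (∀ Λ : Measure (CodeSpace E), M.IsAsymptotic j0 xp pbar Λ →
      0 < Λ (M.Gset j0 xp)) → ∀ Λ : Measure (CodeSpace E), ¬M.IsPerp j0 xp pbar Λ := by
    intro h2 Λ hperp
    have hasym := MarkovSystem.asym_of_perp_Bnull M j0 xp pbar hxp hperp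
    have hB0 := MarkovSystem.perp_B_null M j0 xp pbar hperp
    have hpos := h2 Λ hasym
    have h' := hasym
    obtain ⟨hprob, hinv, hD, -⟩ := h'
    rw [MarkovSystem.measure_Gset_eq_BsetM M j0 xp hxp huc hprob hinv hD, hB0] at hpos
    exact lt_irrefl 0 hpos
  have hB1of3 : (∀ Λ : Measure (CodeSpace E), ¬M.IsPerp j0 xp pbar Λ) →
      ∀ Λ : Measure (CodeSpace E), M.IsAsymptotic j0 xp pbar Λ → Λ (M.BsetM j0 xp) = 1 := by
    intro h3 Λ hasym
    by_contra hBne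
    rcases MarkovSystem.conditioned_asym M j0 xp pbar hxp huc hpbar hasym hBne with ⟨Λ', hasym', hB0'⟩
    exact h3 Λ' (MarkovSystem.perp_of_asym_Bnull M j0 xp pbar hxp hasym' hB0')
  have h35 : (∀ Λ : Measure (CodeSpace E), ¬M.IsPerp j0 xp pbar Λ) →
      ∀ Λ : Measure (CodeSpace E), M.IsAsymptotic j0 xp pbar Λ → Λ (M.Gset j0 xp) = 1 := by
    intro h3 Λ hasym
    have hB1 := hB1of3 h3 Λ hasym
    have h' := hasym
    obtain ⟨hprob, hinv, hD, -⟩ := h'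
    rw [MarkovSystem.measure_Gset_eq_BsetM M j0 xp hxp huc hprob hinv hD, hB1]
  have h54 : (∀ Λ : Measure (CodeSpace E), M.IsAsymptotic j0 xp pbar Λ →
        Λ (M.Gset j0 xp) = 1) →
      ∀ Λ : Measure (CodeSpace E), M.IsAsymptotic j0 xp pbar Λ ↔ M.IsEquilibrium j0 xp Λ := by
    intro h5 Λ
    constructor
    · intro hasym
      have hG := h5 Λ hasym
      have h' := hasym
      obtain ⟨hprob, hinv, hD, hcond⟩ := h'
      have hB1 : Λ (M.BsetM j0 xp) = 1 := by
        rw [MarkovSystem.measure_Gset_eq_BsetM M j0 xp hxp huc hprob hinv hD] at hG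
        exact hG
      exact ⟨hprob, hinv, hD, fun e => (hcond e).trans
        (MarkovSystem.equil_target_eq M j0 xp pbar hxp hpbar hprob hD hB1 e).symm⟩
    · intro heq
      have hB1 := MarkovSystem.equil_B_one M j0 xp heq
      obtain ⟨hprob, hinv, hD, hcond⟩ := heq
      exact ⟨hprob, hinv, hD, fun e => (hcond e).trans
        (MarkovSystem.equil_target_eq M j0 xp pbar hxp hpbar hprob hD hB1 e)⟩
  have h41 : (∀ Λ : Measure (CodeSpace E),
        M.IsAsymptotic j0 xp pbar Λ ↔ M.IsEquilibrium j0 xp Λ) →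
      M.IsNonDegenerate j0 xp pbar := by
    intro h4 Λ hasym
    have heq := (h4 Λ).1 hasym
    have hB1 := MarkovSystem.equil_B_one M j0 xp heq
    refine (MarkovSystem.measure_BsetM_pos_iff M j0 xp).1 ?_
    rw [hB1]
    exact zero_lt_one
  tfae_have 1 → 2 := h12
  tfae_have 2 → 3 := h23
  tfae_have 3 → 5 := h35
  tfae_have 5 → 4 := h54
  tfae_have 4 → 1 := h41
  tfae_finish
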